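/- arXiv:2504.05821 — 6 statements merged into one kernel-verified Lean document; each statement's English description precedes it below -/
import Mathlib

section
/- Let M be a commutative regular monoid, with a choice, for each x ∈ M, of x† ∈ M satisfying x†·x² = x. Then the monoid bialgebra kM is a 1-Hopf algebra: the linear map S determined by S(x) = x† satisfies S * Id^{*2} = Id^{*1} = Id in convolution, and if M is not a group then kM admits no antipode (is not a Hopf algebra), so 1 is minimal. -/
noncomputable section
open TensorProduct LinearMap

/-- Convolution product of linear maps from a bialgebra to an algebra. -/
def conv {k B A : Type*} [CommRing k] [Ring B] [Bialgebra k B]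
    [Ring A] [Algebra k A] (f g : B →ₗ[k] A) : B →ₗ[k] A :=
  LinearMap.mul' k A ∘ₗ TensorProduct.map f g ∘ₗ Coalgebra.comul

/-- Unit of the convolution algebra: u ∘ ε. -/
def convUnit (k B A : Type*) [CommRing k] [Ring B] [Bialgebra k B]
    [Ring A] [Algebra k A] : B →ₗ[k] A :=
  Algebra.linearMap k A ∘ₗ Coalgebra.counit

/-- n-th convolution power of the identity. -/
def convPow (k B : Type*) [CommRing k] [Ring B] [Bialgebra k B] : ℕ → (B →ₗ[k] B)
  | 0 => convUnit k B B
  | n + 1 => conv (convPow k B n) LinearMap.id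

/-- The submodule (B ⊗ B)·Δ(ker ε) of B ⊗ B. -/
def oslashRel (k B : Type*) [CommRing k] [Ring B] [Bialgebra k B] :
    Submodule k (B ⊗[k] B) :=
  Submodule.span k {z | ∃ (m : B ⊗[k] B) (b : B),
    Coalgebra.counit (R := k) b = 0 ∧ z = m * Coalgebra.comul b}

/-- B ⊘ B. -/
abbrev Oslash (k B : Type*) [CommRing k] [Ring B] [Bialgebra k B] :=
  (B ⊗[k] B) ⧸ oslashRel k B

/-- The class of x ⊗ y in B ⊘ B. -/
abbrev omk (k : Type*) {B : Type*} [CommRing k] [Ring B] [Bialgebra k B]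
    (z : B ⊗[k] B) : Oslash k B := Submodule.Quotient.mk z

/-- i_B : B → B ⊘ B, b ↦ b ⊘ 1. -/
def iB (k B : Type*) [CommRing k] [Ring B] [Bialgebra k B] : B →ₗ[k] Oslash k B :=
  (oslashRel k B).mkQ ∘ₗ (TensorProduct.mk k B B).flip 1

/-- The diagonal right coaction of B on B ⊗ B: Σ x₁ ⊗ y₁ ⊗ x₂y₂. -/
def coact (k B : Type*) [CommRing k] [Ring B] [Bialgebra k B] :
    (B ⊗[k] B) →ₗ[k] (B ⊗[k] B) ⊗[k] B :=
  (TensorProduct.map LinearMap.id (LinearMap.mul' k B)) ∘ₗ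
    (TensorProduct.tensorTensorTensorComm k B B B B).toLinearMap ∘ₗ
    (TensorProduct.map Coalgebra.comul Coalgebra.comul)

/-- z ↦ z ⊗ 1. -/
def unitR (k B : Type*) [CommRing k] [Ring B] [Bialgebra k B] :
    (B ⊗[k] B) →ₗ[k] (B ⊗[k] B) ⊗[k] B :=
  (TensorProduct.map LinearMap.id (Algebra.linearMap k B)) ∘ₗ
    (TensorProduct.rid k (B ⊗[k] B)).symm.toLinearMap

/-- B ⧄ B : the coinvariants of B ⊗ B. -/
def coinv (k B : Type*) [CommRing k] [Ring B] [Bialgebra k B] :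
    Submodule k (B ⊗[k] B) :=
  LinearMap.eqLocus (coact k B) (unitR k B)

/-- Σ x ⊗ y ↦ Σ x ε(y), on all of B ⊗ B. -/
def pB0 (k B : Type*) [CommRing k] [Ring B] [Bialgebra k B] :
    (B ⊗[k] B) →ₗ[k] B :=
  (TensorProduct.rid k B).toLinearMap ∘ₗ TensorProduct.map LinearMap.id Coalgebra.counit

/-- Σ x ⊗ y ↦ Σ ε(x) y, on all of B ⊗ B. -/
def qB0 (k B : Type*) [CommRing k] [Ring B] [Bialgebra k B] :
    (B ⊗[k] B) →ₗ[k] B :=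
  (TensorProduct.lid k B).toLinearMap ∘ₗ TensorProduct.map Coalgebra.counit LinearMap.id

/-- p_B : B ⧄ B → B. -/
def pB (k B : Type*) [CommRing k] [Ring B] [Bialgebra k B] :
    coinv k B →ₗ[k] B :=
  pB0 k B ∘ₗ (coinv k B).subtype


lemma conv_grouplike {k B : Type*} [CommRing k] [Ring B] [Bialgebra k B]
    (f g : B →ₗ[k] B) (b : B) (hb : Coalgebra.comul (R := k) b = b ⊗ₜ[k] b) :
    conv f g b = f b * g b := by
  simp [conv, hb]

lemma convUnit_grouplike {k B : Type*} [CommRing k] [Ring B] [Bialgebra k B]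
    (b : B) (hb : Coalgebra.counit (R := k) b = 1) :
    convUnit k B B b = 1 := by
  simp [convUnit, hb]

/-- The monoid bialgebra `kM` of a commutative regular monoid `M` is
encoded as a bialgebra `B` with a multiplicative basis `φ : M →* B` of grouplike
elements; `S` is the linear map determined by `S(x) = x†`. -/
theorem stmt14 (k B M : Type*) [Field k] [Ring B] [Bialgebra k B] [CommMonoid M]
    (φ : M →* B)
    (hΔ : ∀ g : M, Coalgebra.comul (R := k) (φ g) = φ g ⊗ₜ[k] φ g)
    (hε : ∀ g : M, Coalgebra.counit (R := k) (φ g) = 1)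
    (hbasis : ∃ bas : Module.Basis M k B, ∀ g : M, bas g = φ g)
    (dag : M → M) (hdag : ∀ x : M, dag x * (x * x) = x)
    (S : B →ₗ[k] B) (hS : ∀ x : M, S (φ x) = φ (dag x)) :
    conv S (convPow k B 2) = convPow k B 1 ∧
    convPow k B 1 = LinearMap.id ∧
    ((¬ ∀ x : M, IsUnit x) →
      ¬ ∃ S' : B →ₗ[k] B, conv S' LinearMap.id = convUnit k B B ∧
        conv LinearMap.id S' = convUnit k B B) := by
  obtain ⟨bas, hbas⟩ := hbasis
  have key1 : ∀ m : M, convPow k B 1 (φ m) = φ m := by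
    intro m
    have h : convPow k B 1 (φ m) = convUnit k B B (φ m) * φ m := by
      show conv (convPow k B 0) LinearMap.id (φ m) = _
      rw [conv_grouplike _ _ _ (hΔ m)]; rfl
    rw [h, convUnit_grouplike _ (hε m), one_mul]
  have key2 : ∀ m : M, convPow k B 2 (φ m) = φ (m * m) := by
    intro m
    show conv (convPow k B 1) LinearMap.id (φ m) = _
    rw [conv_grouplike _ _ _ (hΔ m), key1 m, LinearMap.id_apply, ← map_mul]
  refine ⟨?_, ?_, ?_⟩
  · apply bas.ext
    intro g
    rw [hbas g, conv_grouplike _ _ _ (hΔ g), key1 g, key2 g, hS g, ← map_mul, hdag g]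
  · apply bas.ext
    intro g
    rw [hbas g, key1 g, LinearMap.id_apply]
  · intro hnot hex
    obtain ⟨S', h1, _⟩ := hex
    push_neg at hnot
    obtain ⟨x, hx⟩ := hnot
    have hinv : S' (φ x) * φ x = 1 := by
      have h := LinearMap.congr_fun h1 (φ x)
      rwa [conv_grouplike _ _ _ (hΔ x), LinearMap.id_apply,
        convUnit_grouplike _ (hε x)] at h
    set F := bas.repr (S' (φ x)) with hF
    have hrep : S' (φ x) = F.sum fun g c => c • bas g := by
      rw [hF]
      exact (bas.linearCombination_repr _).symm
    have hsum : (1 : B) = F.sum fun g c => c • bas (g * x) := by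
      calc (1 : B) = S' (φ x) * φ x := hinv.symm
        _ = (F.sum fun g c => c • bas g) * φ x := by rw [← hrep]
        _ = F.sum fun g c => (c • bas g) * φ x := by rw [Finsupp.sum_mul]
        _ = F.sum fun g c => c • bas (g * x) := by
            apply Finsupp.sum_congr
            intro g _
            rw [smul_mul_assoc, hbas g, hbas (g * x), ← map_mul]
    have hone : bas (1 : M) = (1 : B) := by rw [hbas 1, map_one]
    have hrepr : (Finsupp.single (1 : M) (1 : k)) =
        F.sum fun g c => c • Finsupp.single (g * x) (1 : k) := by
      have h := congrArg bas.repr hsum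
      rw [← hone, bas.repr_self, map_finsuppSum] at h
      simpa [bas.repr_self] using h
    have hexists : ∃ g : M, g * x = 1 := by
      by_contra hno
      push_neg at hno
      have heval := congrArg (fun f => f (1 : M)) hrepr
      simp [Finsupp.sum_apply, Finsupp.single_apply, hno] at heval
    obtain ⟨g, hg⟩ := hexists
    exact hx (IsUnit.of_mul_eq_one (a := x) g (by rw [mul_comm]; exact hg))
end
end

section
/- Let B = kM be a monoid bialgebra. Then: (a) the map p_B : B ⧄ B → B is surjective if and only if M is a group; (b) p_B is injective if and only if every element of M has at most one right inverse; (c) the map i_B : B → B ⊘ B is injective if and only if M is right cancellative. -/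
noncomputable section
open TensorProduct LinearMap

section Aux

variable {k B M : Type*} [Field k] [Ring B] [Bialgebra k B] [Monoid M]
variable (bas : Module.Basis M k B)
  (hΔ : ∀ g : M, Coalgebra.comul (R := k) (bas g) = bas g ⊗ₜ[k] bas g)
  (hε : ∀ g : M, Coalgebra.counit (R := k) (bas g) = 1)
  (hmul : ∀ a b : M, bas a * bas b = bas (a * b))
  (hone : bas 1 = 1)

/-- The product basis of `B ⊗ B`. -/
local notation "β" => Module.Basis.tensorProduct bas bas

include hΔ in
theorem coact_basis (a b : M) :
    coact k B (bas a ⊗ₜ[k] bas b) = (bas a ⊗ₜ[k] bas b) ⊗ₜ[k] (bas a * bas b) := by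
  simp only [coact, LinearMap.comp_apply, LinearEquiv.coe_coe, TensorProduct.map_tmul, hΔ,
    TensorProduct.tensorTensorTensorComm_tmul, LinearMap.id_coe, id_eq, LinearMap.mul'_apply]

include hone in
theorem unitR_basis (a b : M) :
    unitR k B (bas a ⊗ₜ[k] bas b) = (bas a ⊗ₜ[k] bas b) ⊗ₜ[k] bas 1 := by
  simp only [unitR, LinearMap.comp_apply, LinearEquiv.coe_coe, TensorProduct.rid_symm_apply,
    TensorProduct.map_tmul, LinearMap.id_coe, id_eq, Algebra.linearMap_apply, map_one, hone]

include hε in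
theorem pB0_basis (a b : M) : pB0 k B (bas a ⊗ₜ[k] bas b) = bas a := by
  simp only [pB0, LinearMap.comp_apply, TensorProduct.map_tmul, hε, LinearMap.id_coe, id_eq,
    LinearEquiv.coe_coe, TensorProduct.rid_tmul, one_smul]

include hΔ hmul hone in
theorem span_le_coinv :
    Submodule.span k (β '' {p : M × M | p.1 * p.2 = 1}) ≤ coinv k B := by
  refine Submodule.span_le.mpr ?_
  rintro _ ⟨⟨a, b⟩, hp, rfl⟩
  have hab : a * b = 1 := hp
  show _ ∈ LinearMap.eqLocus _ _
  rw [LinearMap.mem_eqLocus, Module.Basis.tensorProduct_apply, coact_basis bas hΔ,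
    unitR_basis bas hone, hmul, hab]

include hΔ hmul hone in
theorem coinv_le_span :
    coinv k B ≤ Submodule.span k (β '' {p : M × M | p.1 * p.2 = 1}) := by
  classical
  intro z hz
  rw [Module.Basis.mem_span_image]
  intro p0 hp0
  simp only [Finset.mem_coe, Finsupp.mem_support_iff] at hp0
  by_contra hne
  have hne' : p0.1 * p0.2 ≠ 1 := hne
  have hz' : coact k B z = unitR k B z := hz
  set γ := Module.Basis.tensorProduct β bas with hγ
  set f := (β).repr z with hf
  have γapp : ∀ (p : M × M) (m : M), γ (p, m) = (bas p.1 ⊗ₜ[k] bas p.2) ⊗ₜ[k] bas m := by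
    intro p m
    rw [hγ, Module.Basis.tensorProduct_apply', Module.Basis.tensorProduct_apply']
  have hrep : Finsupp.linearCombination k (β) f = z := Module.Basis.linearCombination_repr _ z
  have e1 : coact k B z = f.sum fun p c => c • γ (p, p.1 * p.2) := by
    rw [← hrep, Finsupp.linearCombination_apply, map_finsuppSum]
    refine Finsupp.sum_congr fun p _ => ?_
    rw [map_smul]
    congr 1
    rw [Module.Basis.tensorProduct_apply', coact_basis bas hΔ, hmul, γapp]
  have e2 : unitR k B z = f.sum fun p c => c • γ (p, 1) := by
    rw [← hrep, Finsupp.linearCombination_apply, map_finsuppSum]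
    refine Finsupp.sum_congr fun p _ => ?_
    rw [map_smul]
    congr 1
    rw [Module.Basis.tensorProduct_apply', unitR_basis bas hone, γapp]
  have key := congrArg (fun w => γ.repr w (p0, p0.1 * p0.2)) hz'
  simp only [e1, e2, map_finsuppSum, Finsupp.sum_apply, map_smul, Module.Basis.repr_self,
    Finsupp.smul_apply, Finsupp.single_apply, smul_eq_mul] at key
  have lhs : (f.sum fun p c => c * if (p, p.1 * p.2) = (p0, p0.1 * p0.2) then (1:k) else 0)
      = f p0 := by
    have hcg : ∀ p ∈ f.support,
        (f p * if (p, p.1 * p.2) = (p0, p0.1 * p0.2) then (1:k) else 0)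
          = if p = p0 then f p else 0 := by
      intro p _
      by_cases h : p = p0
      · subst h; simp
      · rw [if_neg h, if_neg (fun hc => h (congrArg Prod.fst hc)), mul_zero]
    rw [Finsupp.sum, Finset.sum_congr rfl hcg, Finset.sum_ite_eq' f.support p0 f,
      if_pos (Finsupp.mem_support_iff.mpr hp0)]
  have rhs : (f.sum fun p c => c * if ((p, (1 : M)) = (p0, p0.1 * p0.2)) then (1:k) else 0)
      = 0 := by
    refine Finset.sum_eq_zero fun p _ => ?_
    show f p * (if ((p, (1 : M)) = (p0, p0.1 * p0.2)) then (1:k) else 0) = 0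
    rw [if_neg, mul_zero]
    simp only [Prod.mk.injEq, not_and]
    exact fun _ h1 => hne' h1.symm
  rw [lhs, rhs] at key
  exact hp0 key

include hΔ hε hmul in
theorem gen_mem_oslash (a b g : M) :
    (β) (a * g, b * g) - (β) (a, b) ∈ oslashRel k B := by
  refine Submodule.subset_span ⟨(β) (a, b), bas g - bas 1, ?_, ?_⟩
  · rw [map_sub, hε, hε, sub_self]
  · rw [map_sub, hΔ g, hΔ 1, mul_sub]
    simp only [Module.Basis.tensorProduct_apply, Algebra.TensorProduct.tmul_mul_tmul, hmul, mul_one]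

include hε in
theorem ker_counit_le (b : B) (hεb : Coalgebra.counit (R := k) b = 0) :
    b ∈ Submodule.span k (Set.range fun g : M => bas g - bas 1) := by
  have hrep : Finsupp.linearCombination k bas (bas.repr b) = b := bas.linearCombination_repr b
  have hsum : ((bas.repr b).sum fun _ c => c) = 0 := by
    have h2 := congrArg (Coalgebra.counit (R := k)) hrep
    rw [Finsupp.linearCombination_apply, map_finsuppSum] at h2
    simp only [map_smul, hε, smul_eq_mul, mul_one] at h2
    rw [hεb] at h2
    exact h2
  have hb2 : b = (bas.repr b).sum fun g c => c • (bas g - bas 1) := by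
    have e1 : ((bas.repr b).sum fun g c => c • (bas g - bas 1))
        = ((bas.repr b).sum fun g c => c • bas g)
          - ((bas.repr b).sum fun _ c => c • bas 1) := by
      rw [← Finsupp.sum_sub]
      exact Finsupp.sum_congr fun g _ => smul_sub _ _ _
    have e2 : ((bas.repr b).sum fun _ c => c • bas 1)
        = (((bas.repr b).sum fun _ c => c) : k) • bas 1 := by
      rw [Finsupp.sum, Finsupp.sum, Finset.sum_smul]
    rw [e1, e2, hsum, zero_smul, sub_zero]
    conv_lhs => rw [← hrep, Finsupp.linearCombination_apply]
  rw [hb2]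
  refine Submodule.sum_mem _ fun g _ => ?_
  exact Submodule.smul_mem _ _ (Submodule.subset_span ⟨g, rfl⟩)

include hΔ hε hmul in
theorem oslash_le_span :
    oslashRel k B ≤ Submodule.span k
      {z : B ⊗[k] B | ∃ a b g : M, z = (β) (a * g, b * g) - (β) (a, b)} := by
  refine Submodule.span_le.mpr ?_
  rintro _ ⟨m, b, hεb, rfl⟩
  set D := {z : B ⊗[k] B | ∃ a b g : M, z = (β) (a * g, b * g) - (β) (a, b)} with hD
  have hm : m ∈ Submodule.comap (LinearMap.mulRight k (Coalgebra.comul (R := k) b))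
      (Submodule.span k D) := by
    suffices h : (⊤ : Submodule k (B ⊗[k] B)) ≤ Submodule.comap
        (LinearMap.mulRight k (Coalgebra.comul (R := k) b)) (Submodule.span k D) from
      h Submodule.mem_top
    rw [← Module.Basis.span_eq (β)]
    refine Submodule.span_le.mpr ?_
    rintro _ ⟨p, rfl⟩
    show (β) p * Coalgebra.comul (R := k) b ∈ Submodule.span k D
    have hbmem := ker_counit_le bas hε b hεb
    have hsub : Submodule.span k (Set.range fun g : M => bas g - bas 1)
        ≤ Submodule.comap ((LinearMap.mulLeft k ((β) p)) ∘ₗ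
            (Coalgebra.comul (R := k) : B →ₗ[k] B ⊗[k] B)) (Submodule.span k D) := by
      refine Submodule.span_le.mpr ?_
      rintro _ ⟨g, rfl⟩
      refine Submodule.subset_span ⟨p.1, p.2, g, ?_⟩
      show (β) p * Coalgebra.comul (R := k) (bas g - bas 1) = _
      rw [map_sub, hΔ g, hΔ 1, mul_sub]
      simp only [Module.Basis.tensorProduct_apply', Module.Basis.tensorProduct_apply,
        Algebra.TensorProduct.tmul_mul_tmul, hmul, mul_one]
    exact hsub hbmem
  simpa using hm

end Aux

/-- The monoid bialgebra `kM` is encoded as a bialgebra `B` with a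
multiplicative basis `φ : M →* B` of grouplike elements. -/
theorem stmt15 (k B M : Type*) [Field k] [Ring B] [Bialgebra k B] [Monoid M]
    (φ : M →* B)
    (hΔ : ∀ g : M, Coalgebra.comul (R := k) (φ g) = φ g ⊗ₜ[k] φ g)
    (hε : ∀ g : M, Coalgebra.counit (R := k) (φ g) = 1)
    (hbasis : ∃ bas : Module.Basis M k B, ∀ g : M, bas g = φ g) :
    (Function.Surjective (pB k B) ↔ ∀ x : M, IsUnit x) ∧
    (Function.Injective (pB k B) ↔
      ∀ a b c : M, a * b = 1 → a * c = 1 → b = c) ∧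
    (Function.Injective (iB k B) ↔
      ∀ a b c : M, a * c = b * c → a = b) := by
  classical
  obtain ⟨bas, hb⟩ := hbasis
  have hΔ' : ∀ g : M, Coalgebra.comul (R := k) (bas g) = bas g ⊗ₜ[k] bas g := by
    intro g; rw [hb g]; exact hΔ g
  have hε' : ∀ g : M, Coalgebra.counit (R := k) (bas g) = 1 := by
    intro g; rw [hb]; exact hε g
  have hmul' : ∀ a b : M, bas a * bas b = bas (a * b) := by
    intro a b; rw [hb, hb, hb, ← map_mul]
  have hone' : bas 1 = 1 := by rw [hb]; exact map_one φ
  set β := Module.Basis.tensorProduct bas bas with hβ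
  have hβapp : ∀ a b : M, β (a, b) = bas a ⊗ₜ[k] bas b := fun a b =>
    Module.Basis.tensorProduct_apply bas bas a b
  have hpBval : ∀ z : coinv k B, pB k B z = pB0 k B (z : B ⊗[k] B) := fun z => rfl
  have hiBval : ∀ y : B, iB k B y = Submodule.Quotient.mk (p := oslashRel k B)
      (y ⊗ₜ[k] (1 : B)) := fun y => rfl
  refine ⟨?_, ?_, ?_⟩
  · -- (a)
    constructor
    · intro hsurj
      have hri : ∀ x : M, ∃ y : M, x * y = 1 := by
        intro x
        obtain ⟨z, hz⟩ := hsurj (bas x)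
        have h1 : (z : B ⊗[k] B) ∈ Submodule.span k (β '' {p : M × M | p.1 * p.2 = 1}) :=
          coinv_le_span bas hΔ' hmul' hone' z.2
        have h2 : bas x ∈ Submodule.span k (bas '' {a : M | ∃ c, a * c = 1}) := by
          rw [← hz, hpBval]
          refine Submodule.span_mono ?_
            (Submodule.apply_mem_span_image_of_mem_span (pB0 k B) h1)
          rintro _ ⟨_, ⟨⟨a, c⟩, hp, rfl⟩, rfl⟩
          exact ⟨a, ⟨c, hp⟩, by rw [hβapp, pB0_basis bas hε']⟩
        exact Module.Basis.self_mem_span_image bas |>.mp h2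
      intro x
      obtain ⟨y, hxy⟩ := hri x
      obtain ⟨c, hyc⟩ := hri y
      have hxc : x = c := by
        calc x = x * (y * c) := by rw [hyc, mul_one]
        _ = (x * y) * c := by rw [mul_assoc]
        _ = c := by rw [hxy, one_mul]
      have hyx : y * x = 1 := by rw [hxc]; exact hyc
      exact ⟨⟨x, y, hxy, hyx⟩, rfl⟩
    · intro hu
      rw [← LinearMap.range_eq_top, eq_top_iff, ← bas.span_eq]
      refine Submodule.span_le.mpr ?_
      rintro _ ⟨x, rfl⟩
      obtain ⟨u, hu'⟩ := hu x
      have hx1 : x * ↑u⁻¹ = 1 := by rw [← hu']; exact u.mul_inv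
      have hmem : β (x, ↑u⁻¹) ∈ coinv k B :=
        span_le_coinv bas hΔ' hmul' hone'
          (Submodule.subset_span ⟨(x, ↑u⁻¹), hx1, rfl⟩)
      rw [SetLike.mem_coe, LinearMap.mem_range]
      refine ⟨⟨β (x, ↑u⁻¹), hmem⟩, ?_⟩
      rw [hpBval]
      show pB0 k B (β (x, ↑u⁻¹)) = bas x
      rw [hβapp, pB0_basis bas hε']
  · -- (b)
    constructor
    · intro hinj a b c hab hac
      have m1 : β (a, b) ∈ coinv k B :=
        span_le_coinv bas hΔ' hmul' hone' (Submodule.subset_span ⟨(a, b), hab, rfl⟩)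
      have m2 : β (a, c) ∈ coinv k B :=
        span_le_coinv bas hΔ' hmul' hone' (Submodule.subset_span ⟨(a, c), hac, rfl⟩)
      have hpq : pB k B ⟨β (a, b), m1⟩ = pB k B ⟨β (a, c), m2⟩ := by
        rw [hpBval, hpBval]
        show pB0 k B (β (a, b)) = pB0 k B (β (a, c))
        rw [hβapp, hβapp, pB0_basis bas hε', pB0_basis bas hε']
      have := congrArg Subtype.val (hinj hpq)
      have h2 : (a, b) = (a, c) := β.injective this
      exact (Prod.ext_iff.mp h2).2
    · intro huniq
      set L : B →ₗ[k] B ⊗[k] B := bas.constr k fun a =>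
        if h : ∃ c : M, a * c = 1 then β (a, Classical.choose h) else 0 with hL
      have hLp : ∀ v ∈ Submodule.span k (β '' {p : M × M | p.1 * p.2 = 1}),
          L (pB0 k B v) = v := by
        intro v hv
        have hle : Submodule.span k (β '' {p : M × M | p.1 * p.2 = 1})
            ≤ LinearMap.eqLocus (L ∘ₗ pB0 k B) LinearMap.id := by
          refine Submodule.span_le.mpr ?_
          rintro _ ⟨⟨a, c⟩, hp, rfl⟩
          rw [SetLike.mem_coe, LinearMap.mem_eqLocus, LinearMap.comp_apply, LinearMap.id_apply]
          rw [hβapp, pB0_basis bas hε', hL, Module.Basis.constr_basis]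
          have hex : ∃ c' : M, a * c' = 1 := ⟨c, hp⟩
          rw [dif_pos hex, ← hβapp]
          exact congrArg (fun t => β (a, t)) (huniq a _ c (Classical.choose_spec hex) hp)
        exact hle hv
      intro z w hzw
      apply Subtype.ext
      have hz := coinv_le_span bas hΔ' hmul' hone' z.2
      have hw := coinv_le_span bas hΔ' hmul' hone' w.2
      calc (z : B ⊗[k] B) = L (pB0 k B z) := (hLp _ hz).symm
        _ = L (pB0 k B w) := by rw [← hpBval, ← hpBval, hzw]
        _ = w := hLp _ hw
  · -- (c)
    constructor
    · intro hinj a b c hacbc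
      have d1 := gen_mem_oslash bas hΔ' hε' hmul' a 1 c
      have d2 := gen_mem_oslash bas hΔ' hε' hmul' b 1 c
      have key : β (a, 1) - β (b, 1) ∈ oslashRel k B := by
        have e : β (a, 1) - β (b, 1)
            = (β (b * c, 1 * c) - β (b, 1)) - (β (a * c, 1 * c) - β (a, 1)) := by
          rw [hacbc]; abel
        rw [e]; exact Submodule.sub_mem _ d2 d1
      have heq : iB k B (bas a) = iB k B (bas b) := by
        rw [← sub_eq_zero, ← map_sub, hiBval, Submodule.Quotient.mk_eq_zero]
        have e2 : (bas a - bas b) ⊗ₜ[k] (1 : B) = β (a, 1) - β (b, 1) := by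
          rw [hβapp, hβapp, hone', TensorProduct.sub_tmul]
        rw [e2]; exact key
      exact bas.injective (hinj heq)
    · intro hrc
      rw [← LinearMap.ker_eq_bot, eq_bot_iff]
      intro y hy
      rw [Submodule.mem_bot]
      have hy' : y ⊗ₜ[k] (1 : B) ∈ oslashRel k B := by
        have := LinearMap.mem_ker.mp hy
        rw [hiBval, Submodule.Quotient.mk_eq_zero] at this
        exact this
      set cfun : M × M → (M →₀ k) := fun p =>
        if h : ∃ z : M, p.1 = z * p.2 then Finsupp.single (Classical.choose h) 1 else 0
        with hcfun
      set T : (B ⊗[k] B) →ₗ[k] (M →₀ k) := β.constr k cfun with hT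
      have hc : ∀ a b g : M, cfun (a * g, b * g) = cfun (a, b) := by
        intro a b g
        by_cases h : ∃ z : M, a = z * b
        · have h2 : ∃ z' : M, a * g = z' * (b * g) := by
            obtain ⟨z, hz⟩ := h
            exact ⟨z, by rw [hz, mul_assoc]⟩
          show (if h' : ∃ z : M, (a * g, b * g).1 = z * (a * g, b * g).2
            then Finsupp.single (Classical.choose h') (1 : k) else 0)
            = (if h' : ∃ z : M, (a, b).1 = z * (a, b).2
            then Finsupp.single (Classical.choose h') (1 : k) else 0)
          rw [dif_pos h2, dif_pos h]
          have e2 : a = Classical.choose h * b := Classical.choose_spec h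
          have e3 : a = Classical.choose h2 * b := by
            refine hrc a _ g ?_
            rw [mul_assoc]
            exact Classical.choose_spec h2
          have : Classical.choose h2 = Classical.choose h := by
            refine hrc _ _ b ?_
            rw [← e3]
            exact e2
          rw [this]
        · have h2 : ¬ ∃ z' : M, a * g = z' * (b * g) := by
            rintro ⟨z', hz'⟩
            exact h ⟨z', hrc a (z' * b) g (by rw [hz', mul_assoc])⟩
          show (if h' : ∃ z : M, (a * g, b * g).1 = z * (a * g, b * g).2
            then Finsupp.single (Classical.choose h') (1 : k) else 0)
            = (if h' : ∃ z : M, (a, b).1 = z * (a, b).2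
            then Finsupp.single (Classical.choose h') (1 : k) else 0)
          rw [dif_neg h2, dif_neg h]
      have hTker : oslashRel k B ≤ LinearMap.ker T := by
        refine le_trans (oslash_le_span bas hΔ' hε' hmul') ?_
        refine Submodule.span_le.mpr ?_
        rintro _ ⟨a, b, g, rfl⟩
        rw [SetLike.mem_coe, LinearMap.mem_ker, map_sub, hT, Module.Basis.constr_basis,
          Module.Basis.constr_basis, hc, sub_self]
      have hTy0 : T (y ⊗ₜ[k] (1 : B)) = 0 := LinearMap.mem_ker.mp (hTker hy')
      have hTy : T (y ⊗ₜ[k] (1 : B)) = bas.repr y := by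
        conv_lhs => rw [← bas.linearCombination_repr y, Finsupp.linearCombination_apply,
          Finsupp.sum]
        rw [TensorProduct.sum_tmul, map_sum]
        have hterm : ∀ a : M, T ((bas.repr y a • bas a) ⊗ₜ[k] (1 : B))
            = Finsupp.single a (bas.repr y a) := by
          intro a
          rw [← TensorProduct.smul_tmul', map_smul]
          have : bas a ⊗ₜ[k] (1 : B) = β (a, 1) := by rw [hβapp, hone']
          rw [this, hT, Module.Basis.constr_basis]
          have hex : ∃ z : M, (a, (1:M)).1 = z * (a, (1:M)).2 := ⟨a, (mul_one a).symm⟩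
          show bas.repr y a • (if h : ∃ z : M, (a, (1:M)).1 = z * (a, (1:M)).2
            then Finsupp.single (Classical.choose h) 1 else 0) = _
          rw [dif_pos hex]
          have : Classical.choose hex = a := by
            have := Classical.choose_spec hex
            simpa [mul_one] using this.symm
          rw [this, Finsupp.smul_single, smul_eq_mul, mul_one]
        rw [Finset.sum_congr rfl fun a _ => hterm a]
        rw [← Finsupp.sum, Finsupp.sum_single]
      rw [hTy] at hTy0
      exact bas.repr.map_eq_zero_iff.mp hTy0
end
end

section
/- Let B = kM be a monoid bialgebra. Then B ⧄ B is spanned over k by the elements g ⊗ h with g, h ∈ M and gh = 1, and the image of p_B : B ⧄ B → B, Σ xᶦ ⊗ yᵢ ↦ Σ xᶦ ε(yᵢ), equals k·M^ℓ where M^ℓ = {g ∈ M : ∃ h ∈ M, gh = 1} is the submonoid of left units. -/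
noncomputable section
open TensorProduct LinearMap

/-- The monoid bialgebra `kM` is encoded as a bialgebra `B` with a
multiplicative basis `φ : M →* B` of grouplike elements. -/
theorem stmt16 (k B M : Type*) [Field k] [Ring B] [Bialgebra k B] [Monoid M]
    (φ : M →* B)
    (hΔ : ∀ g : M, Coalgebra.comul (R := k) (φ g) = φ g ⊗ₜ[k] φ g)
    (hε : ∀ g : M, Coalgebra.counit (R := k) (φ g) = 1)
    (hbasis : ∃ bas : Module.Basis M k B, ∀ g : M, bas g = φ g) :
    coinv k B = Submodule.span k
      {z : B ⊗[k] B | ∃ g h : M, g * h = 1 ∧ z = φ g ⊗ₜ[k] φ h} ∧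
    LinearMap.range (pB k B) = Submodule.span k (⇑φ '' {g : M | ∃ h : M, g * h = 1}) := by
  classical
  obtain ⟨bas, hbas⟩ := hbasis
  set S : Set (B ⊗[k] B) := {z | ∃ g h : M, g * h = 1 ∧ z = φ g ⊗ₜ[k] φ h} with hS
  have hone : φ 1 = (1 : B) := map_one φ
  have hcoact : ∀ g h : M,
      coact k B (φ g ⊗ₜ[k] φ h) = (φ g ⊗ₜ[k] φ h) ⊗ₜ[k] φ (g * h) := by
    intro g h
    simp [coact, hΔ, LinearMap.mul'_apply, map_mul]
  have hunitR : ∀ z : B ⊗[k] B, unitR k B z = z ⊗ₜ[k] (1 : B) := by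
    intro z
    simp [unitR, Algebra.linearMap_apply]
  set T : Module.Basis (M × M) k (B ⊗[k] B) := Module.Basis.tensorProduct bas bas with hT
  set T3 : Module.Basis ((M × M) × M) k ((B ⊗[k] B) ⊗[k] B) := Module.Basis.tensorProduct T bas with hT3
  have hTp : ∀ p : M × M, T p = φ p.1 ⊗ₜ[k] φ p.2 := by
    rintro ⟨g, h⟩; simp [hT, Module.Basis.tensorProduct_apply, hbas]
  have hT3p : ∀ (p : M × M) (l : M), T3 (p, l) = T p ⊗ₜ[k] φ l := by
    intro p l; simp [hT3, Module.Basis.tensorProduct_apply, hbas]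
  -- key coordinate computation for coact
  have hmaps : ∀ p : M × M,
      (Finsupp.lapply (p, p.1 * p.2) ∘ₗ T3.repr.toLinearMap ∘ₗ coact k B) =
      ((Finsupp.lapply p : (M × M →₀ k) →ₗ[k] k) ∘ₗ T.repr.toLinearMap) := by
    intro p
    apply T.ext
    intro r
    have h1 : coact k B (T r) = T3 (r, r.1 * r.2) := by
      rw [hTp, hcoact, hT3p, hTp]
    simp only [LinearMap.coe_comp, Function.comp_apply, LinearEquiv.coe_coe, h1,
      Module.Basis.repr_self, Finsupp.lapply_apply]
    by_cases hr : r = p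
    · subst hr; simp
    · rw [Finsupp.single_eq_of_ne', Finsupp.single_eq_of_ne' hr]
      intro hc
      exact hr (congrArg Prod.fst hc)
  have key : ∀ z ∈ coinv k B, ∀ p : M × M, p.1 * p.2 ≠ 1 → T.repr z p = 0 := by
    intro z hz p hp
    have hz' : coact k B z = unitR k B z := hz
    have h1 : T3.repr (coact k B z) (p, p.1 * p.2) = T.repr z p := by
      have := LinearMap.congr_fun (hmaps p) z
      simpa using this
    have h2 : T3.repr (unitR k B z) (p, p.1 * p.2) = 0 := by
      rw [hunitR, ← hone, ← hbas]
      rw [hT3, Module.Basis.tensorProduct_repr_tmul_apply, Module.Basis.repr_self,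
        Finsupp.single_eq_of_ne' (Ne.symm hp)]
      exact zero_smul _ _
    rw [← h1, hz', h2]
  have hcoinv_le : coinv k B ≤ Submodule.span k S := by
    intro z hz
    have hz2 : z = ((T.repr z).sum fun p c => c • T p) := (Module.Basis.linearCombination_repr T z).symm
    rw [hz2]
    apply Submodule.sum_mem
    intro p hp
    apply Submodule.smul_mem
    apply Submodule.subset_span
    have hp1 : p.1 * p.2 = 1 := by
      by_contra hc
      exact (Finsupp.mem_support_iff.mp hp) (key z hz p hc)
    exact ⟨p.1, p.2, hp1, hTp p⟩
  have hS_le : ∀ z ∈ S, z ∈ coinv k B := by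
    rintro z ⟨g, h, hgh, rfl⟩
    show coact k B _ = unitR k B _
    rw [hcoact, hunitR, hgh, hone]
  have part1 : coinv k B = Submodule.span k S := by
    apply le_antisymm hcoinv_le
    rw [Submodule.span_le]
    exact hS_le
  refine ⟨part1, ?_⟩
  have hpB0 : ∀ g h : M, pB0 k B (φ g ⊗ₜ[k] φ h) = φ g := by
    intro g h
    simp [pB0, hε]
  have hrange : LinearMap.range (pB k B) = Submodule.map (pB0 k B) (coinv k B) := by
    rw [pB, LinearMap.range_comp, Submodule.range_subtype]
  rw [hrange, part1, Submodule.map_span]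
  congr 1
  ext z
  constructor
  · rintro ⟨w, ⟨g, h, hgh, rfl⟩, rfl⟩
    exact ⟨g, ⟨h, hgh⟩, (hpB0 g h).symm ▸ rfl⟩
  · rintro ⟨g, ⟨h, hgh⟩, rfl⟩
    exact ⟨φ g ⊗ₜ[k] φ h, ⟨g, h, hgh, rfl⟩, hpB0 g h⟩
end
end

section
/- Let B be a bialgebra such that the map i_{B^cop} : B^cop → B^cop ⊘ B^cop is surjective (equivalently, there is a linear endomorphism S̄ of B with b ⊘ 1 = 1 ⊘ S̄(b) in B ⊘ B for all b). Then ker(i_B) is a two-sided ideal and a two-sided coideal of B, so the quotient B/ker(i_B) is a bialgebra isomorphic to the image of i_B. -/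
noncomputable section
open TensorProduct LinearMap

section Aux

open Coalgebra

variable {k B : Type*} [CommRing k] [Ring B] [Bialgebra k B]

lemma oslashRel_mul_mem (w : B ⊗[k] B) {z : B ⊗[k] B} (hz : z ∈ oslashRel k B) :
    w * z ∈ oslashRel k B := by
  induction hz using Submodule.span_induction with
  | mem z hz =>
    obtain ⟨m, b, hb, rfl⟩ := hz
    rw [← mul_assoc]
    exact Submodule.subset_span ⟨w * m, b, hb, rfl⟩
  | zero => simp
  | add x y _ _ hx hy => rw [mul_add]; exact add_mem hx hy
  | smul c x _ hx => rw [mul_smul_comm]; exact Submodule.smul_mem _ c hx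

lemma oslashRel_gen_mem (m : B ⊗[k] B) {c : B} (hc : counit (R := k) c = 0) :
    m * comul c ∈ oslashRel k B :=
  Submodule.subset_span ⟨m, c, hc, rfl⟩

lemma iB_apply (x : B) : iB k B x = Submodule.Quotient.mk (x ⊗ₜ[k] (1 : B)) := rfl

lemma iB_eq_zero_iff (x : B) : iB k B x = 0 ↔ x ⊗ₜ[k] (1 : B) ∈ oslashRel k B := by
  rw [iB_apply, Submodule.Quotient.mk_eq_zero]

/-- `∑ ε(left) • right = a`. -/
lemma counit_smul_right_sum {a : B} (r : Coalgebra.Repr k a (B × B)) :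
    ∑ i ∈ r.index, counit (R := k) (r.left i) • r.right i = a := by
  have h := Coalgebra.sum_counit_tmul_eq r
  have := congrArg (TensorProduct.lid k B) h
  simp only [map_sum, TensorProduct.lid_tmul] at this
  simpa using this

/-- `∑ ε(right) • left = a`. -/
lemma counit_smul_left_sum {a : B} (r : Coalgebra.Repr k a (B × B)) :
    ∑ i ∈ r.index, counit (R := k) (r.right i) • r.left i = a := by
  have h := Coalgebra.sum_tmul_counit_eq r
  have := congrArg (TensorProduct.rid k B) h
  simp only [map_sum, TensorProduct.rid_tmul] at this
  simpa using this

end Aux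

section Aux2
open Coalgebra Bialgebra

variable {k B : Type*} [CommRing k] [Ring B] [Bialgebra k B]

/-- ε ⊗ ε as an algebra map `B ⊗ B → k`. -/
def chiAux : (B ⊗[k] B) →ₐ[k] k :=
  (Algebra.TensorProduct.lid k k).toAlgHom.comp
    (Algebra.TensorProduct.map (counitAlgHom k B) (counitAlgHom k B))

lemma chiAux_tmul (u v : B) :
    chiAux (u ⊗ₜ[k] v) = counit (R := k) u * counit (R := k) v := by
  simp [chiAux, smul_eq_mul]

lemma chiAux_comul (c : B) : chiAux (comul (R := k) c) = counit (R := k) c := by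
  have r := Coalgebra.Repr.arbitrary k c
  rw [← r.eq, map_sum]
  have h := counit_smul_left_sum r
  have h2 := congrArg (counit (R := k)) h
  rw [map_sum] at h2
  simp only [chiAux_tmul]
  rw [← h2]
  exact Finset.sum_congr rfl fun i _ => by rw [map_smul, smul_eq_mul, mul_comm]

lemma chiAux_vanish {z : B ⊗[k] B} (hz : z ∈ oslashRel k B) : chiAux z = 0 := by
  induction hz using Submodule.span_induction with
  | mem z hz =>
    obtain ⟨m, c, hc, rfl⟩ := hz
    rw [map_mul, chiAux_comul, hc, mul_zero]
  | zero => simp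
  | add x y _ _ hx hy => rw [map_add, hx, hy, add_zero]
  | smul a x _ hx => rw [map_smul, hx, smul_zero]

/-- The twisted flip on four tensor factors, as an algebra equivalence. -/
def rearrAlg : ((B ⊗[k] B) ⊗[k] (B ⊗[k] B)) ≃ₐ[k] ((B ⊗[k] B) ⊗[k] (B ⊗[k] B)) :=
  (Algebra.TensorProduct.congr (AlgEquiv.refl (A₁ := B ⊗[k] B)) (Algebra.TensorProduct.comm k B B)).trans
    (Algebra.TensorProduct.tensorTensorTensorComm k k k k B B B B)

lemma rearrAlg_tmul (x x' y y' : B) :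
    rearrAlg ((x ⊗ₜ[k] x') ⊗ₜ[k] (y ⊗ₜ[k] y')) = (x ⊗ₜ[k] y') ⊗ₜ[k] (x' ⊗ₜ[k] y) := by
  simp [rearrAlg, Algebra.TensorProduct.congr, Algebra.TensorProduct.comm_tmul,
    Algebra.TensorProduct.tensorTensorTensorComm_tmul]

/-- The comultiplication of `B ⊗ B^cop`, as an algebra map. -/
def EAux : (B ⊗[k] B) →ₐ[k] ((B ⊗[k] B) ⊗[k] (B ⊗[k] B)) :=
  (rearrAlg (k := k) (B := B)).toAlgHom.comp (Algebra.TensorProduct.map (comulAlgHom k B) (comulAlgHom k B))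

lemma EAux_tmul (u v : B) :
    EAux (u ⊗ₜ[k] v) = rearrAlg (comul (R := k) u ⊗ₜ[k] comul (R := k) v) := by
  simp [EAux]

def permL : (B ⊗[k] (B ⊗[k] (B ⊗[k] B))) →ₗ[k] ((B ⊗[k] B) ⊗[k] (B ⊗[k] B)) :=
  (TensorProduct.tensorTensorTensorComm k B B B B).toLinearMap ∘ₗ
  (TensorProduct.assoc k B B (B ⊗[k] B)).symm.toLinearMap ∘ₗ
  (LinearMap.lTensor B (LinearMap.lTensor B (TensorProduct.comm k B B).toLinearMap))

lemma permL_tmul (p q s t : B) :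
    permL (p ⊗ₜ[k] (q ⊗ₜ[k] (s ⊗ₜ[k] t))) = (p ⊗ₜ[k] t) ⊗ₜ[k] (q ⊗ₜ[k] s) := by
  simp [permL]

def permQ : (B ⊗[k] (B ⊗[k] B)) →ₗ[k] (B ⊗[k] (B ⊗[k] B)) :=
  (TensorProduct.comm k (B ⊗[k] B) B).toLinearMap ∘ₗ
  (TensorProduct.assoc k B B B).symm.toLinearMap

lemma permQ_tmul (e f g : B) :
    permQ (e ⊗ₜ[k] (f ⊗ₜ[k] g)) = g ⊗ₜ[k] (e ⊗ₜ[k] f) := by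
  simp [permQ]

end Aux2

section Aux3
open Coalgebra Bialgebra

variable {k B : Type*} [CommRing k] [Ring B] [Bialgebra k B]

/-- Evaluate `permL ∘ (id ⊗ id ⊗ Δ)` on a pure tensor, using a chosen
representation of the comultiplication of the last factor. -/
lemma bigM_eval (p q g : B) (rg : Coalgebra.Repr k g (B × B)) :
    (permL ∘ₗ LinearMap.lTensor B (LinearMap.lTensor B (comul (R := k))))
        (p ⊗ₜ[k] (q ⊗ₜ[k] g))
      = ∑ m ∈ rg.index, (p ⊗ₜ[k] rg.right m) ⊗ₜ[k] (q ⊗ₜ[k] rg.left m) := by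
  simp only [LinearMap.comp_apply, LinearMap.lTensor_tmul]
  rw [← rg.eq, TensorProduct.tmul_sum, TensorProduct.tmul_sum, map_sum]
  exact Finset.sum_congr rfl fun m _ => permL_tmul _ _ _ _

lemma bigQ_eval (x e f g : B) :
    (TensorProduct.map ((TensorProduct.mk k B B) x) LinearMap.id ∘ₗ permQ)
        (e ⊗ₜ[k] (f ⊗ₜ[k] g))
      = (x ⊗ₜ[k] g) ⊗ₜ[k] (e ⊗ₜ[k] f) := by
  simp [permQ_tmul]

/-- The key coassociativity computation:
`E(Δ b) = ∑ (b₍₁₎ ⊗ b₍₄₎) ⊗ Δ b₍₂₎` in Sweedler notation. -/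
lemma EAux_comul (b : B) (r : Coalgebra.Repr k b (B × B))
    (rx : ∀ i : r.ι, Coalgebra.Repr k (r.left i) (B × B))
    (ry : ∀ i : r.ι, Coalgebra.Repr k (r.right i) (B × B))
    (rc : ∀ (i : r.ι) (l : (ry i).ι), Coalgebra.Repr k ((ry i).left l) (B × B))
    (rd : ∀ (i : r.ι) (l : (ry i).ι), Coalgebra.Repr k ((ry i).right l) (B × B)) :
    EAux (comul (R := k) b) =
      ∑ i ∈ r.index, ∑ l ∈ (ry i).index,
        (r.left i ⊗ₜ[k] (ry i).right l) ⊗ₜ[k] comul (R := k) ((ry i).left l) := by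
  classical
  have step1 : EAux (comul (R := k) b) =
      ∑ i ∈ r.index, ∑ j ∈ (rx i).index, ∑ l ∈ (ry i).index,
        ((rx i).left j ⊗ₜ[k] (ry i).right l) ⊗ₜ[k]
          ((rx i).right j ⊗ₜ[k] (ry i).left l) := by
    conv_lhs => rw [← r.eq]
    rw [map_sum]
    refine Finset.sum_congr rfl fun i _ => ?_
    rw [EAux_tmul, ← (rx i).eq, ← (ry i).eq, TensorProduct.sum_tmul, map_sum]
    refine Finset.sum_congr rfl fun j _ => ?_
    rw [TensorProduct.tmul_sum, map_sum]
    exact Finset.sum_congr rfl fun l _ => rearrAlg_tmul _ _ _ _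
  have hstar := Coalgebra.sum_tmul_tmul_eq r rx ry
  have hM := congrArg
    (⇑(permL ∘ₗ LinearMap.lTensor B (LinearMap.lTensor B (comul (R := k))))) hstar
  rw [map_sum, map_sum] at hM
  simp only [map_sum] at hM
  have hMl : ∑ i ∈ r.index, ∑ j ∈ (rx i).index,
      (permL ∘ₗ LinearMap.lTensor B (LinearMap.lTensor B (comul (R := k))))
        ((rx i).left j ⊗ₜ[k] ((rx i).right j ⊗ₜ[k] r.right i))
      = ∑ i ∈ r.index, ∑ j ∈ (rx i).index, ∑ l ∈ (ry i).index,
        ((rx i).left j ⊗ₜ[k] (ry i).right l) ⊗ₜ[k]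
          ((rx i).right j ⊗ₜ[k] (ry i).left l) :=
    Finset.sum_congr rfl fun i _ => Finset.sum_congr rfl fun j _ =>
      bigM_eval _ _ _ (ry i)
  have hMr : ∑ i ∈ r.index, ∑ l ∈ (ry i).index,
      (permL ∘ₗ LinearMap.lTensor B (LinearMap.lTensor B (comul (R := k))))
        (r.left i ⊗ₜ[k] ((ry i).left l ⊗ₜ[k] (ry i).right l))
      = ∑ i ∈ r.index, ∑ l ∈ (ry i).index, ∑ m ∈ (rd i l).index,
        (r.left i ⊗ₜ[k] (rd i l).right m) ⊗ₜ[k]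
          ((ry i).left l ⊗ₜ[k] (rd i l).left m) :=
    Finset.sum_congr rfl fun i _ => Finset.sum_congr rfl fun l _ =>
      bigM_eval _ _ _ (rd i l)
  rw [hMl, hMr] at hM
  -- second coassociativity step, for each i
  have step3 : ∀ i ∈ r.index,
      ∑ l ∈ (ry i).index, ∑ m ∈ (rd i l).index,
        (r.left i ⊗ₜ[k] (rd i l).right m) ⊗ₜ[k]
          ((ry i).left l ⊗ₜ[k] (rd i l).left m)
      = ∑ l ∈ (ry i).index,
        (r.left i ⊗ₜ[k] (ry i).right l) ⊗ₜ[k] comul (R := k) ((ry i).left l) := by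
    intro i _
    have hstar2 := Coalgebra.sum_tmul_tmul_eq (ry i) (rc i) (rd i)
    have hQ := congrArg
      (⇑(TensorProduct.map ((TensorProduct.mk k B B) (r.left i)) LinearMap.id ∘ₗ permQ))
      hstar2
    rw [map_sum, map_sum] at hQ
    simp only [map_sum] at hQ
    have hQl : ∑ l ∈ (ry i).index, ∑ m ∈ (rc i l).index,
        (TensorProduct.map ((TensorProduct.mk k B B) (r.left i)) LinearMap.id ∘ₗ permQ)
          ((rc i l).left m ⊗ₜ[k] ((rc i l).right m ⊗ₜ[k] (ry i).right l))
        = ∑ l ∈ (ry i).index,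
          (r.left i ⊗ₜ[k] (ry i).right l) ⊗ₜ[k] comul (R := k) ((ry i).left l) := by
      refine Finset.sum_congr rfl fun l _ => ?_
      rw [Finset.sum_congr rfl fun m (_ : m ∈ (rc i l).index) => bigQ_eval (k := k)
        (r.left i) ((rc i l).left m) ((rc i l).right m) ((ry i).right l)]
      rw [← TensorProduct.tmul_sum, (rc i l).eq]
    have hQr : ∑ l ∈ (ry i).index, ∑ m ∈ (rd i l).index,
        (TensorProduct.map ((TensorProduct.mk k B B) (r.left i)) LinearMap.id ∘ₗ permQ)
          ((ry i).left l ⊗ₜ[k] ((rd i l).left m ⊗ₜ[k] (rd i l).right m))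
        = ∑ l ∈ (ry i).index, ∑ m ∈ (rd i l).index,
          (r.left i ⊗ₜ[k] (rd i l).right m) ⊗ₜ[k]
            ((ry i).left l ⊗ₜ[k] (rd i l).left m) :=
      Finset.sum_congr rfl fun l _ => Finset.sum_congr rfl fun m _ => bigQ_eval _ _ _ _
    rw [hQl, hQr] at hQ
    exact hQ.symm
  rw [step1, hM]
  exact Finset.sum_congr rfl step3

end Aux3

section Aux4
open Coalgebra Bialgebra

variable {k B : Type*} [CommRing k] [Ring B] [Bialgebra k B]

local notation "π" => Submodule.mkQ (oslashRel k B)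

lemma vanish_of_pure {Z : (B ⊗[k] B) ⊗[k] (B ⊗[k] B)}
    (h : ∀ u v : B ⊗[k] B, TensorProduct.map π π ((u ⊗ₜ[k] v) * Z) = 0)
    (w : (B ⊗[k] B) ⊗[k] (B ⊗[k] B)) : TensorProduct.map π π (w * Z) = 0 := by
  induction w using TensorProduct.induction_on with
  | zero => rw [zero_mul, map_zero]
  | tmul u v => exact h u v
  | add a b ha hb => rw [add_mul, map_add, ha, hb, add_zero]

lemma vanish_right (s : B ⊗[k] B) {c : B} (hc : counit (R := k) c = 0)
    (w : (B ⊗[k] B) ⊗[k] (B ⊗[k] B)) :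
    TensorProduct.map π π (w * (s ⊗ₜ[k] comul (R := k) c)) = 0 := by
  refine vanish_of_pure (fun u v => ?_) w
  rw [Algebra.TensorProduct.tmul_mul_tmul, TensorProduct.map_tmul]
  have : π (v * comul (R := k) c) = 0 := by
    rw [Submodule.mkQ_apply, Submodule.Quotient.mk_eq_zero]
    exact oslashRel_gen_mem v hc
  rw [this, TensorProduct.tmul_zero]

lemma vanish_left {c : B} (hc : counit (R := k) c = 0) (t : B ⊗[k] B)
    (w : (B ⊗[k] B) ⊗[k] (B ⊗[k] B)) :
    TensorProduct.map π π (w * (comul (R := k) c ⊗ₜ[k] t)) = 0 := by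
  refine vanish_of_pure (fun u v => ?_) w
  rw [Algebra.TensorProduct.tmul_mul_tmul, TensorProduct.map_tmul]
  have : π (u * comul (R := k) c) = 0 := by
    rw [Submodule.mkQ_apply, Submodule.Quotient.mk_eq_zero]
    exact oslashRel_gen_mem u hc
  rw [this, TensorProduct.zero_tmul]

/-- The key vanishing lemma. -/
lemma map_mkQ_mul_EAux_comul {b : B} (hb : counit (R := k) b = 0)
    (w : (B ⊗[k] B) ⊗[k] (B ⊗[k] B)) :
    TensorProduct.map π π (w * EAux (comul (R := k) b)) = 0 := by
  classical
  have r := Coalgebra.Repr.arbitrary k b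
  have ry : ∀ i : r.ι, Coalgebra.Repr k (r.right i) (B × B) := fun i => Coalgebra.Repr.arbitrary k _
  rw [EAux_comul b r (fun i => Coalgebra.Repr.arbitrary k _) ry
    (fun i l => Coalgebra.Repr.arbitrary k _) (fun i l => Coalgebra.Repr.arbitrary k _)]
  simp only [Finset.mul_sum, map_sum]
  have hterm : ∀ i ∈ r.index,
      ∑ l ∈ (ry i).index, TensorProduct.map π π
        (w * ((r.left i ⊗ₜ[k] (ry i).right l) ⊗ₜ[k] comul (R := k) ((ry i).left l)))
      = ∑ l ∈ (ry i).index, counit (R := k) ((ry i).left l) •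
          TensorProduct.map π π
            (w * ((r.left i ⊗ₜ[k] (ry i).right l) ⊗ₜ[k] (1 : B ⊗[k] B))) := by
    intro i _
    refine Finset.sum_congr rfl fun l _ => ?_
    set c := (ry i).left l with hcdef
    have hsplit : comul (R := k) c
        = comul (R := k) (c - counit (R := k) c • 1) + counit (R := k) c • (1 : B ⊗[k] B) := by
      rw [map_sub, map_smul, Bialgebra.comul_one]; abel
    rw [hsplit, TensorProduct.tmul_add, mul_add, map_add]
    have h1 : counit (R := k) (c - counit (R := k) c • (1 : B)) = 0 := by
      rw [map_sub, map_smul, Bialgebra.counit_one, smul_eq_mul, mul_one, sub_self]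
    rw [vanish_right _ h1 w]
    rw [TensorProduct.tmul_smul, mul_smul_comm, map_smul, zero_add]
  rw [Finset.sum_congr rfl hterm]
  have hcollect : ∀ i ∈ r.index,
      ∑ l ∈ (ry i).index, counit (R := k) ((ry i).left l) •
          TensorProduct.map π π
            (w * ((r.left i ⊗ₜ[k] (ry i).right l) ⊗ₜ[k] (1 : B ⊗[k] B)))
      = TensorProduct.map π π
          (w * ((r.left i ⊗ₜ[k] r.right i) ⊗ₜ[k] (1 : B ⊗[k] B))) := by
    intro i _
    have : ∑ l ∈ (ry i).index, counit (R := k) ((ry i).left l) •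
          (w * ((r.left i ⊗ₜ[k] (ry i).right l) ⊗ₜ[k] (1 : B ⊗[k] B)))
        = w * ((r.left i ⊗ₜ[k] r.right i) ⊗ₜ[k] (1 : B ⊗[k] B)) := by
      rw [Finset.sum_congr rfl fun l (_ : l ∈ (ry i).index) =>
        (mul_smul_comm (counit (R := k) ((ry i).left l)) w _).symm, ← Finset.mul_sum]
      congr 1
      calc ∑ l ∈ (ry i).index, counit (R := k) ((ry i).left l) •
            ((r.left i ⊗ₜ[k] (ry i).right l) ⊗ₜ[k] (1 : B ⊗[k] B))
          = (∑ l ∈ (ry i).index, r.left i ⊗ₜ[k]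
              (counit (R := k) ((ry i).left l) • (ry i).right l)) ⊗ₜ[k] (1 : B ⊗[k] B) := by
            rw [TensorProduct.sum_tmul]
            exact Finset.sum_congr rfl fun l _ => by
              simp only [TensorProduct.tmul_smul, TensorProduct.smul_tmul']
        _ = (r.left i ⊗ₜ[k] r.right i) ⊗ₜ[k] (1 : B ⊗[k] B) := by
            rw [← TensorProduct.tmul_sum, counit_smul_right_sum (ry i)]
    rw [← this, map_sum]
    exact Finset.sum_congr rfl fun l _ => by rw [map_smul]
  rw [Finset.sum_congr rfl hcollect, ← map_sum, ← Finset.mul_sum, ← TensorProduct.sum_tmul,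
    r.eq]
  exact vanish_left hb _ w
end Aux4

section Aux5
open Coalgebra Bialgebra

variable {k B : Type*} [CommRing k] [Ring B] [Bialgebra k B]

local notation "π" => Submodule.mkQ (oslashRel k B)

lemma map_mkQ_EAux_vanish {z : B ⊗[k] B} (hz : z ∈ oslashRel k B) :
    TensorProduct.map π π (EAux z) = 0 := by
  induction hz using Submodule.span_induction with
  | mem z hz =>
    obtain ⟨m, c, hc, rfl⟩ := hz
    rw [map_mul]
    exact map_mkQ_mul_EAux_comul hc (EAux m)
  | zero => rw [map_zero, map_zero]
  | add x y _ _ hx hy => rw [map_add, map_add, hx, hy, add_zero]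
  | smul a x _ hx => rw [map_smul, map_smul, hx, smul_zero]

lemma map_iB_iB_comul {x : B} (hx : iB k B x = 0) :
    TensorProduct.map (iB k B) (iB k B) (comul (R := k) x) = 0 := by
  have hx' : x ⊗ₜ[k] (1 : B) ∈ oslashRel k B := (iB_eq_zero_iff x).mp hx
  have key : TensorProduct.map π π (EAux (x ⊗ₜ[k] (1 : B)))
      = TensorProduct.map (iB k B) (iB k B) (comul (R := k) x) := by
    have r := Coalgebra.Repr.arbitrary k x
    rw [EAux_tmul, Bialgebra.comul_one, Algebra.TensorProduct.one_def, ← r.eq,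
      TensorProduct.sum_tmul, map_sum, map_sum, map_sum]
    refine Finset.sum_congr rfl fun i _ => ?_
    rw [rearrAlg_tmul, TensorProduct.map_tmul, TensorProduct.map_tmul]
    rfl
  rw [← key]
  exact map_mkQ_EAux_vanish hx'

end Aux5
section T
variable {k M N P Q : Type*} [CommRing k]
  [AddCommGroup M] [Module k M] [AddCommGroup N] [Module k N]
  [AddCommGroup P] [Module k P] [AddCommGroup Q] [Module k Q]

/-- If `f, g` are surjective and `z` is killed by `f ⊗ g`, then
`z ∈ ker f ⊗ N + M ⊗ ker g`. -/
lemma mem_sup_of_map_eq_zero (f : M →ₗ[k] P) (g : N →ₗ[k] Q)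
    (hf : Function.Surjective f) (hg : Function.Surjective g)
    {z : M ⊗[k] N} (hz : TensorProduct.map f g z = 0) :
    z ∈ LinearMap.range (TensorProduct.map (LinearMap.ker f).subtype
        (LinearMap.id : N →ₗ[k] N)) ⊔
      LinearMap.range (TensorProduct.map (LinearMap.id : M →ₗ[k] M)
        (LinearMap.ker g).subtype) := by
  have hef : Function.Exact (LinearMap.ker f).subtype f := by
    rw [LinearMap.exact_iff, Submodule.range_subtype]
  have heg : Function.Exact (LinearMap.ker g).subtype g := by
    rw [LinearMap.exact_iff, Submodule.range_subtype]
  have e1 : Function.Exact (rTensor N (LinearMap.ker f).subtype) (rTensor N f) :=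
    rTensor_exact N hef hf
  have e2 : Function.Exact (lTensor P (LinearMap.ker g).subtype) (lTensor P g) :=
    lTensor_exact P heg hg
  -- z' := (f ⊗ id) z
  have hz' : lTensor P g (rTensor N f z) = 0 := by
    rw [← LinearMap.comp_apply, lTensor_comp_rTensor, hz]
  obtain ⟨w, hw⟩ := (e2 (rTensor N f z)).mp hz'
  -- w : P ⊗ ker g with lTensor P subtype w = rTensor N f z
  obtain ⟨w₀, hw₀⟩ := rTensor_surjective (LinearMap.ker g : Submodule k N) (g := f) hf w
  set z₂ : M ⊗[k] N := TensorProduct.map LinearMap.id (LinearMap.ker g).subtype w₀ with hz₂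
  have hcomm : rTensor N f z₂ = rTensor N f z := by
    have h1 : rTensor N f ∘ₗ TensorProduct.map LinearMap.id (LinearMap.ker g).subtype
        = lTensor P (LinearMap.ker g).subtype ∘ₗ rTensor (LinearMap.ker g) f := by
      ext m n; simp
    calc rTensor N f z₂ = (rTensor N f ∘ₗ TensorProduct.map LinearMap.id
          (LinearMap.ker g).subtype) w₀ := rfl
      _ = lTensor P (LinearMap.ker g).subtype (rTensor (LinearMap.ker g) f w₀) := by rw [h1]; rfl
      _ = rTensor N f z := by rw [hw₀, hw]
  have hker : z - z₂ ∈ LinearMap.ker (rTensor N f) := by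
    simp [LinearMap.mem_ker, map_sub, hcomm]
  obtain ⟨v, hv⟩ := (e1 _).mp hker
  refine Submodule.mem_sup.mpr ⟨rTensor N (LinearMap.ker f).subtype v, ⟨v, ?_⟩, z₂, ⟨w₀, rfl⟩, ?_⟩
  · rfl
  · rw [hv]; abel
end T

theorem stmt17 (k B : Type*) [Field k] [Ring B] [Bialgebra k B]
    (Sb : B →ₗ[k] B)
    (hSb : ∀ b : B, omk k (b ⊗ₜ[k] (1 : B)) = omk k ((1 : B) ⊗ₜ[k] Sb b)) :
    (∀ x : B, iB k B x = 0 → ∀ b : B, iB k B (b * x) = 0 ∧ iB k B (x * b) = 0) ∧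
    (∀ x : B, iB k B x = 0 → Coalgebra.counit (R := k) x = 0) ∧
    (∀ x : B, iB k B x = 0 → Coalgebra.comul (R := k) x ∈
      LinearMap.range (TensorProduct.map (LinearMap.ker (iB k B)).subtype
        (LinearMap.id : B →ₗ[k] B)) ⊔
      LinearMap.range (TensorProduct.map (LinearMap.id : B →ₗ[k] B)
        (LinearMap.ker (iB k B)).subtype)) ∧
    Nonempty ((B ⧸ LinearMap.ker (iB k B)) ≃ₗ[k] LinearMap.range (iB k B)) := by
  refine ⟨?_, ?_, ?_, ⟨(iB k B).quotKerEquivRange⟩⟩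
  · -- two-sided ideal
    intro x hx b
    have hx' : x ⊗ₜ[k] (1 : B) ∈ oslashRel k B := (iB_eq_zero_iff x).mp hx
    constructor
    · rw [iB_eq_zero_iff]
      have h := oslashRel_mul_mem (b ⊗ₜ[k] (1 : B)) hx'
      rwa [Algebra.TensorProduct.tmul_mul_tmul, one_mul] at h
    · rw [iB_eq_zero_iff]
      have hb : b ⊗ₜ[k] (1 : B) - (1 : B) ⊗ₜ[k] Sb b ∈ oslashRel k B := by
        have h := hSb b
        rwa [Submodule.Quotient.eq] at h
      have h1 := oslashRel_mul_mem (x ⊗ₜ[k] (1 : B)) hb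
      have h2 := oslashRel_mul_mem ((1 : B) ⊗ₜ[k] Sb b) hx'
      have key : (x * b) ⊗ₜ[k] (1 : B)
          = (x ⊗ₜ[k] (1 : B)) * (b ⊗ₜ[k] (1 : B) - (1 : B) ⊗ₜ[k] Sb b)
            + ((1 : B) ⊗ₜ[k] Sb b) * (x ⊗ₜ[k] (1 : B)) := by
        rw [mul_sub]
        simp only [Algebra.TensorProduct.tmul_mul_tmul, one_mul, mul_one]
        abel
      rw [key]
      exact add_mem h1 h2
  · -- counit vanishes on the kernel
    intro x hx
    have hx' : x ⊗ₜ[k] (1 : B) ∈ oslashRel k B := (iB_eq_zero_iff x).mp hx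
    have h := chiAux_vanish hx'
    rwa [chiAux_tmul, Bialgebra.counit_one, mul_one] at h
  · -- coideal property
    intro x hx
    have h0 := map_iB_iB_comul hx
    have hcomp : (LinearMap.range (iB k B)).subtype ∘ₗ (iB k B).rangeRestrict = iB k B :=
      LinearMap.subtype_comp_codRestrict _ _ _
    have hmapeq : TensorProduct.map (iB k B) (iB k B)
        = TensorProduct.map (LinearMap.range (iB k B)).subtype
            (LinearMap.range (iB k B)).subtype ∘ₗ
          TensorProduct.map ((iB k B).rangeRestrict) ((iB k B).rangeRestrict) := by
      rw [← TensorProduct.map_comp, hcomp]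
    have hSinj : Function.Injective (LinearMap.range (iB k B)).subtype :=
      Submodule.injective_subtype _
    have hr : Function.Injective
        ((LinearMap.range (iB k B)).subtype.rTensor (LinearMap.range (iB k B))) :=
      Module.Flat.rTensor_preserves_injective_linearMap _ hSinj
    have hl : Function.Injective
        ((LinearMap.range (iB k B)).subtype.lTensor (Oslash k B)) :=
      Module.Flat.lTensor_preserves_injective_linearMap _ hSinj
    have hinjS : Function.Injective (TensorProduct.map
        (LinearMap.range (iB k B)).subtype (LinearMap.range (iB k B)).subtype) := by
      rw [← lTensor_comp_rTensor, LinearMap.coe_comp]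
      exact hl.comp hr
    have hf0 : TensorProduct.map ((iB k B).rangeRestrict) ((iB k B).rangeRestrict)
        (Coalgebra.comul (R := k) x) = 0 := by
      apply hinjS
      rw [map_zero, ← LinearMap.comp_apply, ← hmapeq, h0]
    have hmem := mem_sup_of_map_eq_zero ((iB k B).rangeRestrict) ((iB k B).rangeRestrict)
      (LinearMap.surjective_rangeRestrict _) (LinearMap.surjective_rangeRestrict _) hf0
    rwa [LinearMap.ker_rangeRestrict] at hmem
end
end

section
/- Let B be a bialgebra for which p_B : B ⧄ B → B is injective, with associated linear endomorphism T of B satisfying T(Σ xᶦ ε(yᵢ)) = Σ ε(xᶦ) yᵢ for all Σ xᶦ ⊗ yᵢ ∈ B ⧄ B. Then for all a, b in the image of p_B: (1) a₁ T(a₂) = ε(a)·1; (2) T(a₁) ⊗ T(a₂) = T(a)₂ ⊗ T(a)₁; (3) T(ab) = T(b) T(a). -/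
noncomputable section
open TensorProduct LinearMap

open Coalgebra

set_option maxHeartbeats 1000000
set_option synthInstance.maxHeartbeats 400000

section Aux
variable (k B : Type*) [Field k] [Ring B] [Bialgebra k B]

/-- The basic braiding bilinear map. -/
def braid : (B ⊗[k] B) →ₗ[k] (B ⊗[k] B) →ₗ[k] (B ⊗[k] B) ⊗[k] B :=
  (TensorProduct.mk k (B ⊗[k] B) (B ⊗[k] B)).compr₂
    ((TensorProduct.map LinearMap.id (LinearMap.mul' k B)) ∘ₗ
      (TensorProduct.tensorTensorTensorComm k B B B B).toLinearMap)

@[simp] lemma braid_tmul (x y u v : B) :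
    braid k B (x ⊗ₜ y) (u ⊗ₜ v) = (x ⊗ₜ u) ⊗ₜ[k] (y * v) := rfl

lemma unitR_apply (z : B ⊗[k] B) : unitR k B z = z ⊗ₜ 1 := by
  simp [unitR]

lemma coact_tmul (x y : B) :
    coact k B (x ⊗ₜ y) = braid k B (comul x) (comul y) := rfl

@[simp] lemma pB0_tmul (x y : B) : pB0 k B (x ⊗ₜ y) = counit (R := k) y • x := by
  simp [pB0]

@[simp] lemma qB0_tmul (x y : B) : qB0 k B (x ⊗ₜ y) = counit (R := k) x • y := by
  simp [qB0]

variable {k B}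

lemma repr_counit_right {x : B} {ι : Type*} (r : Coalgebra.Repr k x ι) :
    ∑ i ∈ r.index, counit (R := k) (r.right i) • r.left i = x := by
  have h := congrArg (TensorProduct.rid k B) (Coalgebra.sum_tmul_counit_eq r)
  rw [map_sum] at h
  simp only [TensorProduct.rid_tmul] at h
  simpa using h

lemma repr_counit_left {x : B} {ι : Type*} (r : Coalgebra.Repr k x ι) :
    ∑ i ∈ r.index, counit (R := k) (r.left i) • r.right i = x := by
  have h := congrArg (TensorProduct.lid k B) (Coalgebra.sum_counit_tmul_eq r)
  rw [map_sum] at h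
  simp only [TensorProduct.lid_tmul] at h
  simpa using h

/-- Slice lemma, left-tensor version. -/
lemma sliceL {Q : Type*} [AddCommGroup Q] [Module k Q]
    (g₁ g₂ : (B ⊗[k] B) →ₗ[k] Q) (hg : ∀ u ∈ coinv k B, g₁ u = g₂ u)
    (w : B ⊗[k] (B ⊗[k] B))
    (hw : lTensor B (coact k B) w = lTensor B (unitR k B) w) :
    lTensor B g₁ w = lTensor B g₂ w := by
  have hker : lTensor B (coact k B - unitR k B) w = 0 := by
    rw [lTensor_sub]; exact sub_eq_zero_of_eq hw
  have hex := Module.Flat.lTensor_exact (M := B)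
    (LinearMap.exact_subtype_ker_map (coact k B - unitR k B))
  obtain ⟨w', hw'⟩ := (hex w).mp hker
  have hcomp : g₁ ∘ₗ (ker (coact k B - unitR k B)).subtype
      = g₂ ∘ₗ (ker (coact k B - unitR k B)).subtype := by
    ext u
    exact hg u.1 (by simpa [coinv, LinearMap.eqLocus_eq_ker_sub] using u.2)
  have e1 : lTensor B g₁ w = lTensor B (g₁ ∘ₗ (ker (coact k B - unitR k B)).subtype) w' := by
    rw [lTensor_comp, LinearMap.comp_apply, hw']
  have e2 : lTensor B g₂ w = lTensor B (g₂ ∘ₗ (ker (coact k B - unitR k B)).subtype) w' := by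
    rw [lTensor_comp, LinearMap.comp_apply, hw']
  rw [e1, e2, hcomp]

/-- Slice lemma, right-tensor version. -/
lemma sliceR {Q : Type*} [AddCommGroup Q] [Module k Q]
    (g₁ g₂ : (B ⊗[k] B) →ₗ[k] Q) (hg : ∀ u ∈ coinv k B, g₁ u = g₂ u)
    (w : (B ⊗[k] B) ⊗[k] B)
    (hw : rTensor B (coact k B) w = rTensor B (unitR k B) w) :
    rTensor B g₁ w = rTensor B g₂ w := by
  have hker : rTensor B (coact k B - unitR k B) w = 0 := by
    rw [rTensor_sub]; exact sub_eq_zero_of_eq hw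
  have hex := Module.Flat.rTensor_exact (M := B)
    (LinearMap.exact_subtype_ker_map (coact k B - unitR k B))
  obtain ⟨w', hw'⟩ := (hex w).mp hker
  have hcomp : g₁ ∘ₗ (ker (coact k B - unitR k B)).subtype
      = g₂ ∘ₗ (ker (coact k B - unitR k B)).subtype := by
    ext u
    exact hg u.1 (by simpa [coinv, LinearMap.eqLocus_eq_ker_sub] using u.2)
  have e1 : rTensor B g₁ w = rTensor B (g₁ ∘ₗ (ker (coact k B - unitR k B)).subtype) w' := by
    rw [rTensor_comp, LinearMap.comp_apply, hw']
  have e2 : rTensor B g₂ w = rTensor B (g₂ ∘ₗ (ker (coact k B - unitR k B)).subtype) w' := by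
    rw [rTensor_comp, LinearMap.comp_apply, hw']
  rw [e1, e2, hcomp]

end Aux

section Waux
variable (k B : Type*) [Field k] [Ring B] [Bialgebra k B]

/-- Σ x ⊗ y ↦ Σ ε(x)ε(y) as a map to k, composed with 1. -/
def Gmap : (B ⊗[k] B) ⊗[k] B →ₗ[k] B :=
  (TensorProduct.lid k B).toLinearMap ∘ₗ
    TensorProduct.map (Coalgebra.counit ∘ₗ pB0 k B) LinearMap.id

@[simp] lemma Gmap_tmul (a u m : B) :
    Gmap k B ((a ⊗ₜ u) ⊗ₜ m) = (counit (R := k) u * counit (R := k) a) • m := by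
  simp [Gmap, smul_smul]

lemma G_coact (zz : B ⊗[k] B) : Gmap k B (coact k B zz) = LinearMap.mul' k B zz := by
  induction zz using TensorProduct.induction_on with
  | zero => simp
  | add u v hu hv => simp only [map_add, hu, hv]
  | tmul x y =>
    have r := Coalgebra.Repr.arbitrary k x
    have s := Coalgebra.Repr.arbitrary k y
    rw [coact_tmul, ← r.eq, ← s.eq]
    simp only [map_sum, LinearMap.sum_apply, braid_tmul, Gmap_tmul]
    rw [LinearMap.mul'_apply]
    conv_rhs => rw [← repr_counit_left r, ← repr_counit_left s]
    rw [Finset.sum_mul_sum, Finset.sum_comm]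
    refine Finset.sum_congr rfl fun j _ => ?_
    refine Finset.sum_congr rfl fun i _ => ?_
    rw [smul_mul_smul_comm, mul_comm]

lemma fact1 (z : B ⊗[k] B) (hz : z ∈ coinv k B) :
    LinearMap.mul' k B z = counit (R := k) (pB0 k B z) • (1 : B) := by
  have hze : coact k B z = unitR k B z := hz
  have h1 := G_coact k B z
  rw [hze, unitR_apply] at h1
  rw [← h1]
  simp [Gmap]

/-- W : x ⊗ y ↦ Σ x₁ ⊗ (x₂ ⊗ y). -/
def Wmap : B ⊗[k] B →ₗ[k] B ⊗[k] (B ⊗[k] B) :=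
  (TensorProduct.assoc k B B B).toLinearMap ∘ₗ rTensor B (Coalgebra.comul)

lemma Wmap_tmul (x y : B) :
    Wmap k B (x ⊗ₜ y) = (TensorProduct.assoc k B B B) ((comul (R := k) x) ⊗ₜ y) := by
  simp [Wmap]

lemma W_pB0 (zz : B ⊗[k] B) :
    lTensor B (pB0 k B) (Wmap k B zz) = comul (R := k) (pB0 k B zz) := by
  induction zz using TensorProduct.induction_on with
  | zero => simp
  | add u v hu hv => simp only [map_add, hu, hv]
  | tmul x y =>
    rw [Wmap_tmul, pB0_tmul, map_smul]
    have : ∀ c : B ⊗[k] B,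
        lTensor B (pB0 k B) ((TensorProduct.assoc k B B B) (c ⊗ₜ y))
          = counit (R := k) y • c := by
      intro c
      induction c using TensorProduct.induction_on with
      | zero => simp
      | add u v hu hv => simp only [add_tmul, map_add, hu, hv, smul_add]
      | tmul a b => simp [TensorProduct.tmul_smul, TensorProduct.smul_tmul']
    exact this (comul x)

lemma W_qB0 (zz : B ⊗[k] B) : lTensor B (qB0 k B) (Wmap k B zz) = zz := by
  induction zz using TensorProduct.induction_on with
  | zero => simp
  | add u v hu hv => simp only [map_add, hu, hv]
  | tmul x y =>
    have r := Coalgebra.Repr.arbitrary k x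
    rw [Wmap_tmul, ← r.eq]
    rw [TensorProduct.sum_tmul, map_sum, map_sum]
    conv_rhs => rw [← repr_counit_right r, TensorProduct.sum_tmul]
    refine Finset.sum_congr rfl fun i _ => ?_
    simp [TensorProduct.smul_tmul', TensorProduct.tmul_smul]
end Waux

section Wcoact
variable (k B : Type*) [Field k] [Ring B] [Bialgebra k B]

/-- Φ : (B⊗B)⊗B → B⊗((B⊗B)⊗B). -/
def Phi : (B ⊗[k] B) ⊗[k] B →ₗ[k] B ⊗[k] ((B ⊗[k] B) ⊗[k] B) :=
  (TensorProduct.assoc k B (B ⊗[k] B) B).toLinearMap ∘ₗ rTensor B (Wmap k B)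

lemma W_coact_aux1 (x y : B) :
    lTensor B (coact k B) (Wmap k B (x ⊗ₜ y))
      = lTensor B ((braid k B).flip (comul (R := k) y))
          (lTensor B (Coalgebra.comul) (comul (R := k) x)) := by
  rw [Wmap_tmul]
  induction comul (R := k) x using TensorProduct.induction_on with
  | zero => simp
  | add u v hu hv => simp only [add_tmul, map_add, hu, hv]
  | tmul a b => simp [coact_tmul]

lemma W_coact_aux2 (x y : B) :
    Phi k B (coact k B (x ⊗ₜ y))
      = lTensor B ((braid k B).flip (comul (R := k) y))
          ((TensorProduct.assoc k B B B)
            (rTensor B (Coalgebra.comul) (comul (R := k) x))) := by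
  rw [coact_tmul]
  induction comul (R := k) x using TensorProduct.induction_on with
  | zero => simp
  | add c₁ c₂ h₁ h₂ =>
      simp only [map_add, add_tmul, LinearMap.map_add, LinearMap.add_apply, h₁, h₂]
  | tmul a b =>
    induction comul (R := k) y using TensorProduct.induction_on with
    | zero => simp
    | add d₁ d₂ h₁ h₂ =>
        simp only [map_add, LinearMap.map_add, LinearMap.add_apply,
          LinearMap.lTensor_add, h₁, h₂]
    | tmul u v =>
      rw [braid_tmul]
      simp only [Phi, LinearMap.comp_apply, LinearEquiv.coe_coe, rTensor_tmul,
        Wmap_tmul]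
      induction comul (R := k) a using TensorProduct.induction_on with
      | zero => simp
      | add e₁ e₂ h₁ h₂ => simp only [add_tmul, map_add, h₁, h₂]
      | tmul p q => simp

lemma W_coact (zz : B ⊗[k] B) :
    lTensor B (coact k B) (Wmap k B zz) = Phi k B (coact k B zz) := by
  induction zz using TensorProduct.induction_on with
  | zero => simp
  | add u v hu hv => simp only [map_add, hu, hv]
  | tmul x y =>
    rw [W_coact_aux1, ← Coalgebra.coassoc_apply, ← W_coact_aux2]

lemma W_unitR (zz : B ⊗[k] B) :
    lTensor B (unitR k B) (Wmap k B zz) = Phi k B (unitR k B zz) := by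
  induction zz using TensorProduct.induction_on with
  | zero => simp
  | add u v hu hv => simp only [map_add, hu, hv]
  | tmul x y =>
    rw [Wmap_tmul, unitR_apply]
    simp only [Phi, LinearMap.comp_apply, LinearEquiv.coe_coe, rTensor_tmul, Wmap_tmul]
    induction comul (R := k) x using TensorProduct.induction_on with
    | zero => simp
    | add e₁ e₂ h₁ h₂ => simp only [add_tmul, map_add, h₁, h₂]
    | tmul a b => simp [unitR_apply]

variable {k B} in
lemma fact2 (T : B →ₗ[k] B) (hT : ∀ u ∈ coinv k B, T (pB0 k B u) = qB0 k B u)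
    (z : B ⊗[k] B) (hz : z ∈ coinv k B) :
    lTensor B T (comul (R := k) (pB0 k B z)) = z := by
  have hze : coact k B z = unitR k B z := hz
  have hw : lTensor B (coact k B) (Wmap k B z) = lTensor B (unitR k B) (Wmap k B z) := by
    rw [W_coact, W_unitR, hze]
  have h1 : lTensor B T (comul (R := k) (pB0 k B z))
      = lTensor B (T ∘ₗ pB0 k B) (Wmap k B z) := by
    rw [← W_pB0, ← LinearMap.comp_apply, ← lTensor_comp]
  rw [h1]
  have h2 := sliceL (T ∘ₗ pB0 k B) (qB0 k B)
    (fun u hu => by simp [LinearMap.comp_apply, hT u hu]) (Wmap k B z) hw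
  rw [h2, W_qB0]

end Wcoact

section Vcoact
variable (k B : Type*) [Field k] [Ring B] [Bialgebra k B]

/-- V : x ⊗ y ↦ Σ (x ⊗ y₂) ⊗ y₁. -/
def Vmap : B ⊗[k] B →ₗ[k] (B ⊗[k] B) ⊗[k] B :=
  (TensorProduct.assoc k B B B).symm.toLinearMap ∘ₗ
    lTensor B ((TensorProduct.comm k B B).toLinearMap ∘ₗ Coalgebra.comul)

lemma Vmap_tmul (x y : B) :
    Vmap k B (x ⊗ₜ y) = (TensorProduct.assoc k B B B).symm
      (x ⊗ₜ (TensorProduct.comm k B B (comul (R := k) y))) := by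
  simp [Vmap]

lemma V_pB0 (zz : B ⊗[k] B) : rTensor B (pB0 k B) (Vmap k B zz) = zz := by
  induction zz using TensorProduct.induction_on with
  | zero => simp
  | add u v hu hv => simp only [map_add, hu, hv]
  | tmul x y =>
    have s := Coalgebra.Repr.arbitrary k y
    rw [Vmap_tmul, ← s.eq]
    rw [map_sum, TensorProduct.tmul_sum, map_sum, map_sum]
    conv_rhs => rw [← repr_counit_right s, TensorProduct.tmul_sum]
    refine Finset.sum_congr rfl fun i _ => ?_
    simp [TensorProduct.smul_tmul', TensorProduct.tmul_smul]

lemma V_qB0 (zz : B ⊗[k] B) :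
    rTensor B (qB0 k B) (Vmap k B zz)
      = TensorProduct.comm k B B (comul (R := k) (qB0 k B zz)) := by
  induction zz using TensorProduct.induction_on with
  | zero => simp
  | add u v hu hv => simp only [map_add, hu, hv]
  | tmul x y =>
    rw [Vmap_tmul, qB0_tmul, map_smul, map_smul]
    induction comul (R := k) y using TensorProduct.induction_on with
    | zero => simp
    | add u v hu hv =>
        simp only [map_add, TensorProduct.tmul_add, smul_add, hu, hv]
    | tmul c e => simp [TensorProduct.smul_tmul', TensorProduct.tmul_smul]

/-- Ψ : (B⊗B)⊗B → ((B⊗B)⊗B)⊗B. -/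
def Psi : (B ⊗[k] B) ⊗[k] B →ₗ[k] ((B ⊗[k] B) ⊗[k] B) ⊗[k] B :=
  (TensorProduct.assoc k (B ⊗[k] B) B B).symm.toLinearMap ∘ₗ
    lTensor (B ⊗[k] B) ((TensorProduct.comm k B B).toLinearMap) ∘ₗ
    (TensorProduct.assoc k (B ⊗[k] B) B B).toLinearMap ∘ₗ
    rTensor B ((TensorProduct.assoc k B B B).symm.toLinearMap) ∘ₗ
    rTensor B (lTensor B ((TensorProduct.comm k B B).toLinearMap ∘ₗ Coalgebra.comul))

lemma V_coact_aux1 (x y : B) :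
    rTensor B (coact k B) (Vmap k B (x ⊗ₜ y))
      = (rTensor B (braid k B (comul (R := k) x)) ∘ₗ
          (TensorProduct.comm k B (B ⊗[k] B)).toLinearMap)
          (lTensor B (Coalgebra.comul) (comul (R := k) y)) := by
  rw [Vmap_tmul]
  induction comul (R := k) y using TensorProduct.induction_on with
  | zero => simp
  | add u v hu hv => simp only [map_add, TensorProduct.tmul_add, hu, hv]
  | tmul c e => simp [coact_tmul]

lemma V_coact_aux2 (x y : B) :
    Psi k B (coact k B (x ⊗ₜ y))
      = (rTensor B (braid k B (comul (R := k) x)) ∘ₗ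
          (TensorProduct.comm k B (B ⊗[k] B)).toLinearMap)
          ((TensorProduct.assoc k B B B)
            (rTensor B (Coalgebra.comul) (comul (R := k) y))) := by
  rw [coact_tmul]
  induction comul (R := k) y using TensorProduct.induction_on with
  | zero => simp
  | add d₁ d₂ h₁ h₂ =>
      simp only [map_add, LinearMap.map_add, LinearMap.add_apply, h₁, h₂]
  | tmul u v =>
    induction comul (R := k) x using TensorProduct.induction_on with
    | zero => simp
    | add c₁ c₂ h₁ h₂ =>
        simp only [map_add, LinearMap.map_add, LinearMap.add_apply,
          LinearMap.rTensor_add, LinearMap.add_comp, h₁, h₂]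
    | tmul p q =>
      rw [braid_tmul]
      simp only [Psi, LinearMap.comp_apply, LinearEquiv.coe_coe, rTensor_tmul,
        lTensor_tmul, TensorProduct.assoc_tmul, TensorProduct.comm_tmul,
        TensorProduct.assoc_symm_tmul]
      induction comul (R := k) u using TensorProduct.induction_on with
      | zero => simp
      | add e₁ e₂ h₁ h₂ =>
          simp only [map_add, TensorProduct.tmul_add, TensorProduct.add_tmul,
            LinearMap.map_add, h₁, h₂]
      | tmul s t => simp

lemma V_coact (zz : B ⊗[k] B) :
    rTensor B (coact k B) (Vmap k B zz) = Psi k B (coact k B zz) := by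
  induction zz using TensorProduct.induction_on with
  | zero => simp
  | add u v hu hv => simp only [map_add, hu, hv]
  | tmul x y =>
    rw [V_coact_aux1, ← Coalgebra.coassoc_apply, ← V_coact_aux2]

lemma V_unitR (zz : B ⊗[k] B) :
    rTensor B (unitR k B) (Vmap k B zz) = Psi k B (unitR k B zz) := by
  induction zz using TensorProduct.induction_on with
  | zero => simp
  | add u v hu hv => simp only [map_add, hu, hv]
  | tmul x y =>
    rw [Vmap_tmul, unitR_apply]
    simp only [Psi, LinearMap.comp_apply, LinearEquiv.coe_coe, rTensor_tmul,
      lTensor_tmul]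
    induction comul (R := k) y using TensorProduct.induction_on with
    | zero => simp
    | add e₁ e₂ h₁ h₂ =>
        simp only [map_add, TensorProduct.tmul_add, TensorProduct.add_tmul,
          LinearMap.map_add, h₁, h₂]
    | tmul c e => simp [unitR_apply]

variable {k B} in
lemma fact3 (T : B →ₗ[k] B) (hT : ∀ u ∈ coinv k B, T (pB0 k B u) = qB0 k B u)
    (z : B ⊗[k] B) (hz : z ∈ coinv k B) :
    rTensor B T z = TensorProduct.comm k B B (comul (R := k) (qB0 k B z)) := by
  have hze : coact k B z = unitR k B z := hz
  have hw : rTensor B (coact k B) (Vmap k B z)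
      = rTensor B (unitR k B) (Vmap k B z) := by
    rw [V_coact, V_unitR, hze]
  have h1 : rTensor B T z = rTensor B (T ∘ₗ pB0 k B) (Vmap k B z) := by
    conv_lhs => rw [← V_pB0 k B z]
    rw [← LinearMap.comp_apply, ← rTensor_comp]
  rw [h1]
  have h2 := sliceR (T ∘ₗ pB0 k B) (qB0 k B)
    (fun u hu => by simp [LinearMap.comp_apply, hT u hu]) (Vmap k B z) hw
  rw [h2, V_qB0]

end Vcoact

section MulLayer
variable (k B : Type*) [Field k] [Ring B] [Bialgebra k B]

/-- Twisted multiplication on B ⊗ B: (x⊗y)·(x'⊗y') = xx' ⊗ y'y. -/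
def muop : (B ⊗[k] B) ⊗[k] (B ⊗[k] B) →ₗ[k] B ⊗[k] B :=
  TensorProduct.map (LinearMap.mul' k B) (LinearMap.mul' k B) ∘ₗ
    lTensor (B ⊗[k] B) ((TensorProduct.comm k B B).toLinearMap) ∘ₗ
    (TensorProduct.tensorTensorTensorComm k B B B B).toLinearMap

@[simp] lemma muop_tmul (x y x' y' : B) :
    muop k B ((x ⊗ₜ y) ⊗ₜ (x' ⊗ₜ y')) = (x * x') ⊗ₜ[k] (y' * y) := by
  simp [muop]

def E1 : B ⊗[k] B →ₗ[k] (B ⊗[k] B) ⊗[k] B :=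
  rTensor B ((TensorProduct.mk k B B).flip 1)

def E2 : B ⊗[k] B →ₗ[k] (B ⊗[k] B) ⊗[k] B :=
  rTensor B (TensorProduct.mk k B B 1)

@[simp] lemma E1_tmul (a b : B) : E1 k B (a ⊗ₜ b) = (a ⊗ₜ (1 : B)) ⊗ₜ[k] b := rfl
@[simp] lemma E2_tmul (a b : B) : E2 k B (a ⊗ₜ b) = ((1 : B) ⊗ₜ a) ⊗ₜ[k] b := rfl

/-- Θ(z ⊗ W) = Σ e₁(x) * W * e₂(y). -/
def Theta : (B ⊗[k] B) ⊗[k] ((B ⊗[k] B) ⊗[k] B) →ₗ[k] (B ⊗[k] B) ⊗[k] B :=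
  letI C := (B ⊗[k] B) ⊗[k] B
  LinearMap.mul' k C ∘ₗ
    rTensor C (LinearMap.mul' k C) ∘ₗ
    (TensorProduct.assoc k C C C).symm.toLinearMap ∘ₗ
    lTensor C ((TensorProduct.comm k C C).toLinearMap) ∘ₗ
    (TensorProduct.assoc k C C C).toLinearMap ∘ₗ
    rTensor C (TensorProduct.map (E1 k B ∘ₗ Coalgebra.comul) (E2 k B ∘ₗ Coalgebra.comul))

lemma Theta_tmul (x y : B) (W : (B ⊗[k] B) ⊗[k] B) :
    Theta k B ((x ⊗ₜ y) ⊗ₜ W)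
      = E1 k B (comul (R := k) x) * W * E2 k B (comul (R := k) y) := by
  simp [Theta, LinearMap.mul'_apply, mul_assoc]

/-- mult3 : ((a⊗b)⊗c) · ((p⊗q)⊗s) = (ap ⊗ qb) ⊗ cs. -/
def mult3 : ((B ⊗[k] B) ⊗[k] B) ⊗[k] ((B ⊗[k] B) ⊗[k] B) →ₗ[k] (B ⊗[k] B) ⊗[k] B :=
  TensorProduct.map (muop k B) (LinearMap.mul' k B) ∘ₗ
    (TensorProduct.tensorTensorTensorComm k (B ⊗[k] B) B (B ⊗[k] B) B).toLinearMap

@[simp] lemma mult3_tmul (u u' : B ⊗[k] B) (c c' : B) :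
    mult3 k B ((u ⊗ₜ c) ⊗ₜ (u' ⊗ₜ c')) = muop k B (u ⊗ₜ u') ⊗ₜ[k] (c * c') := by
  simp [mult3]

def Lam : ((B ⊗[k] B) ⊗[k] B) ⊗[k] (B ⊗[k] B) →ₗ[k] (B ⊗[k] B) ⊗[k] B :=
  mult3 k B ∘ₗ lTensor ((B ⊗[k] B) ⊗[k] B) ((TensorProduct.mk k (B ⊗[k] B) B).flip 1)

@[simp] lemma Lam_tmul (W : (B ⊗[k] B) ⊗[k] B) (w : B ⊗[k] B) :
    Lam k B (W ⊗ₜ w) = mult3 k B (W ⊗ₜ (w ⊗ₜ (1 : B))) := rfl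

lemma f4a (z z' : B ⊗[k] B) :
    pB0 k B (muop k B (z ⊗ₜ z')) = pB0 k B z * pB0 k B z' := by
  induction z using TensorProduct.induction_on with
  | zero => simp
  | add u v hu hv => simp only [TensorProduct.add_tmul, map_add, hu, hv, add_mul]
  | tmul x y =>
    induction z' using TensorProduct.induction_on with
    | zero => simp
    | add u v hu hv => simp only [TensorProduct.tmul_add, map_add, hu, hv, mul_add]
    | tmul x' y' =>
      simp only [muop_tmul, pB0_tmul, Bialgebra.counit_mul, smul_mul_smul_comm]
      rw [mul_comm (counit (R := k) y') (counit y)]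

lemma f4b (z z' : B ⊗[k] B) :
    qB0 k B (muop k B (z ⊗ₜ z')) = qB0 k B z' * qB0 k B z := by
  induction z using TensorProduct.induction_on with
  | zero => simp
  | add u v hu hv => simp only [TensorProduct.add_tmul, map_add, hu, hv, mul_add]
  | tmul x y =>
    induction z' using TensorProduct.induction_on with
    | zero => simp
    | add u v hu hv => simp only [TensorProduct.tmul_add, map_add, hu, hv, add_mul]
    | tmul x' y' =>
      simp only [muop_tmul, qB0_tmul, Bialgebra.counit_mul, smul_mul_smul_comm]
      rw [mul_comm (counit (R := k) x') (counit x)]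

lemma braidmul (c c' d' d : B ⊗[k] B) :
    braid k B (c * c') (d' * d) = E1 k B c * braid k B c' d' * E2 k B d := by
  induction c using TensorProduct.induction_on with
  | zero => simp [zero_mul]
  | add u v hu hv => simp only [add_mul, map_add, LinearMap.add_apply, hu, hv]
  | tmul p q =>
    induction c' using TensorProduct.induction_on with
    | zero => simp [mul_zero]
    | add u v hu hv =>
        simp only [mul_add, map_add, LinearMap.add_apply, LinearMap.map_add,
          add_mul, hu, hv]
    | tmul p' q' =>
      induction d' using TensorProduct.induction_on with
      | zero => simp [zero_mul]
      | add u v hu hv => simp only [add_mul, map_add, mul_add, hu, hv]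
      | tmul u' v' =>
        induction d using TensorProduct.induction_on with
        | zero => simp [mul_zero]
        | add u v hu hv => simp only [mul_add, map_add, mul_add, hu, hv]
        | tmul u v =>
          simp only [Algebra.TensorProduct.tmul_mul_tmul, braid_tmul, E1_tmul,
            E2_tmul, one_mul, mul_one]
          simp [mul_assoc]

lemma f4i (z z' : B ⊗[k] B) :
    coact k B (muop k B (z ⊗ₜ z')) = Theta k B (z ⊗ₜ coact k B z') := by
  induction z using TensorProduct.induction_on with
  | zero => simp
  | add u v hu hv => simp only [TensorProduct.add_tmul, map_add, hu, hv]
  | tmul x y =>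
    induction z' using TensorProduct.induction_on with
    | zero => simp
    | add u v hu hv =>
        simp only [TensorProduct.tmul_add, map_add, TensorProduct.tmul_add, hu, hv]
    | tmul x' y' =>
      rw [muop_tmul, coact_tmul, Bialgebra.comul_mul, Bialgebra.comul_mul,
        braidmul, coact_tmul, Theta_tmul]

lemma f4ii (z w : B ⊗[k] B) :
    Theta k B (z ⊗ₜ (w ⊗ₜ (1 : B))) = Lam k B (coact k B z ⊗ₜ w) := by
  induction z using TensorProduct.induction_on with
  | zero => simp
  | add u v hu hv =>
      simp only [TensorProduct.add_tmul, map_add, hu, hv]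
  | tmul x y =>
    rw [Theta_tmul, coact_tmul]
    induction comul (R := k) x using TensorProduct.induction_on with
    | zero => simp [zero_mul]
    | add c₁ c₂ h₁ h₂ =>
        simp only [map_add, LinearMap.add_apply, add_mul, TensorProduct.add_tmul, h₁, h₂]
    | tmul a b =>
      induction comul (R := k) y using TensorProduct.induction_on with
      | zero => simp [mul_zero]
      | add d₁ d₂ h₁ h₂ =>
          simp only [map_add, LinearMap.map_add, mul_add, TensorProduct.add_tmul, h₁, h₂]
      | tmul u v =>
        induction w using TensorProduct.induction_on with
        | zero => simp [mul_zero, zero_mul]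
        | add w₁ w₂ hw₁ hw₂ =>
            simp only [TensorProduct.add_tmul, TensorProduct.tmul_add, map_add,
              mul_add, add_mul, hw₁, hw₂]
        | tmul p q =>
            simp only [E1_tmul, E2_tmul, braid_tmul, Lam_tmul, mult3_tmul,
              Algebra.TensorProduct.tmul_mul_tmul, muop_tmul, one_mul, mul_one]

lemma f4iii (zz w : B ⊗[k] B) :
    Lam k B ((zz ⊗ₜ (1 : B)) ⊗ₜ w) = unitR k B (muop k B (zz ⊗ₜ w)) := by
  induction zz using TensorProduct.induction_on with
  | zero => simp
  | add u v hu hv =>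
      simp only [TensorProduct.add_tmul, map_add, hu, hv]
  | tmul x y =>
    induction w using TensorProduct.induction_on with
    | zero => simp
    | add w₁ w₂ hw₁ hw₂ =>
        simp only [TensorProduct.tmul_add, map_add, hw₁, hw₂]
    | tmul x' y' =>
      rw [Lam_tmul, mult3_tmul, muop_tmul, unitR_apply, mul_one]

lemma f4c (z z' : B ⊗[k] B) (hz : z ∈ coinv k B) (hz' : z' ∈ coinv k B) :
    muop k B (z ⊗ₜ z') ∈ coinv k B := by
  have hze : coact k B z = unitR k B z := hz
  have hze' : coact k B z' = unitR k B z' := hz'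
  show coact k B _ = unitR k B _
  rw [f4i, hze', unitR_apply, f4ii, hze, unitR_apply, f4iii]

end MulLayer

theorem stmt18 (k B : Type*) [Field k] [Ring B] [Bialgebra k B]
    (hinj : Function.Injective (pB k B))
    (T : B →ₗ[k] B)
    (hT : ∀ z ∈ coinv k B, T (pB0 k B z) = qB0 k B z) :
    ∀ a ∈ pB0 k B '' (coinv k B : Set (B ⊗[k] B)),
      ∀ b ∈ pB0 k B '' (coinv k B : Set (B ⊗[k] B)),
      LinearMap.mul' k B
          ((TensorProduct.map LinearMap.id T) (Coalgebra.comul (R := k) a))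
        = Coalgebra.counit (R := k) a • (1 : B) ∧
      (TensorProduct.map T T) (Coalgebra.comul (R := k) a)
        = (TensorProduct.comm k B B) (Coalgebra.comul (R := k) (T a)) ∧
      T (a * b) = T b * T a := by
  rintro a ⟨z, hz, rfl⟩ b ⟨z', hz', rfl⟩
  have hmap : (TensorProduct.map (LinearMap.id : B →ₗ[k] B) T) = lTensor B T := rfl
  refine ⟨?_, ?_, ?_⟩
  · rw [hmap, fact2 T hT z hz, fact1 k B z hz]
  · have h1 := LinearMap.congr_fun (rTensor_comp_lTensor (f := T) (g := T))
      (Coalgebra.comul (R := k) (pB0 k B z))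
    rw [LinearMap.comp_apply] at h1
    rw [← h1, fact2 T hT z hz, fact3 T hT z hz, hT z hz]
  · rw [← f4a, hT _ (f4c k B z z' hz hz'), f4b, ← hT z hz, ← hT z' hz']
end
end

section
/- Consider the 6-dimensional bialgebra B = k⟨x, y | yx = −xy, x³ = x, y² = 0⟩ with Δ(x) = x ⊗ x, Δ(y) = x ⊗ y + y ⊗ 1, ε(x) = 1, ε(y) = 0 (char k ≠ 2). Then the linear map S := 2·Id − Id^{*3} is an anti-algebra endomorphism of B with S(x) = x, S(y) = (1 − x − x²)y, it satisfies S * Id^{*2} = Id and S * Id = Id * S (so S is a two-sided 1-antipode), and S is invertible with S⁴ = Id. -/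
noncomputable section
open TensorProduct LinearMap

/-- The 6-dimensional bialgebra
`B = k⟨x, y | yx = −xy, x³ = x, y² = 0⟩` is encoded as a bialgebra with elements
`x, y` satisfying the defining relations, the stated comultiplication and counit,
and such that `{1, x, x², y, xy, x²y}` is a `k`-basis. -/
theorem stmt19 (k B : Type*) [Field k] [Ring B] [Bialgebra k B]
    (hchar : (2 : k) ≠ 0)
    (x y : B)
    (hyx : y * x = -(x * y)) (hx3 : x ^ 3 = x) (hy2 : y ^ 2 = 0)
    (hΔx : Coalgebra.comul (R := k) x = x ⊗ₜ[k] x)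
    (hΔy : Coalgebra.comul (R := k) y = x ⊗ₜ[k] y + y ⊗ₜ[k] (1 : B))
    (hεx : Coalgebra.counit (R := k) x = 1)
    (hεy : Coalgebra.counit (R := k) y = 0)
    (bas : Module.Basis (Fin 6) k B)
    (hbas : ∀ i : Fin 6, bas i = ![1, x, x ^ 2, y, x * y, x ^ 2 * y] i) :
    ∃ S : B →ₗ[k] B,
      S = (2 : k) • (LinearMap.id : B →ₗ[k] B) - convPow k B 3 ∧
      S x = x ∧
      S y = (1 - x - x ^ 2) * y ∧
      S 1 = 1 ∧
      (∀ a b : B, S (a * b) = S b * S a) ∧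
      conv S (convPow k B 2) = convPow k B 1 ∧
      conv (convPow k B 2) S = convPow k B 1 ∧
      conv S LinearMap.id = conv LinearMap.id S ∧
      S ∘ₗ S ∘ₗ S ∘ₗ S = LinearMap.id := by
  -- ring normalization lemmas
  have hx3'' : x * x * x = x := by simpa [pow_succ, pow_two] using hx3
  have r2' : x * (x * x) = x := by rw [← mul_assoc, hx3'']
  have r2 : ∀ t : B, x * (x * (x * t)) = x * t := fun t => by
    rw [← mul_assoc, ← mul_assoc, hx3'']
  have r3' : y * y = 0 := by simpa [pow_two] using hy2
  have r3 : ∀ t : B, y * (y * t) = 0 := fun t => by rw [← mul_assoc, r3', zero_mul]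
  have r1 : ∀ t : B, y * (x * t) = -(x * (y * t)) := fun t => by
    rw [← mul_assoc, hyx, neg_mul, mul_assoc]
  have hxx3 : x ^ 2 * x = x := by rw [← pow_succ, hx3]
  -- spanning lemmas
  have hspan : ∀ f g : B →ₗ[k] B, f 1 = g 1 → f x = g x → f (x^2) = g (x^2) →
      f y = g y → f (x*y) = g (x*y) → f (x^2*y) = g (x^2*y) → f = g := by
    intro f g h1 h2 h3 h4 h5 h6
    apply bas.ext; intro i
    fin_cases i <;> rw [hbas] <;>
      first | exact h1 | exact h2 | exact h3 | exact h4 | exact h5 | exact h6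
  have hspan2 : ∀ f g : B →ₗ[k] (B →ₗ[k] B), f 1 = g 1 → f x = g x → f (x^2) = g (x^2) →
      f y = g y → f (x*y) = g (x*y) → f (x^2*y) = g (x^2*y) → f = g := by
    intro f g h1 h2 h3 h4 h5 h6
    apply bas.ext; intro i
    fin_cases i <;> rw [hbas] <;>
      first | exact h1 | exact h2 | exact h3 | exact h4 | exact h5 | exact h6
  -- convolution evaluation
  have hcv : ∀ (f g : B →ₗ[k] B) (b : B) (t : B ⊗[k] B),
      Coalgebra.comul (R := k) b = t →
      conv f g b = LinearMap.mul' k B (TensorProduct.map f g t) := by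
    intro f g b t h; rw [← h]; rfl
  have hP0 : ∀ b : B, convPow k B 0 b = algebraMap k B (Coalgebra.counit (R := k) b) :=
    fun _ => rfl
  have hd1 : convPow k B 1 = conv (convPow k B 0) LinearMap.id := rfl
  have hd2 : convPow k B 2 = conv (convPow k B 1) LinearMap.id := rfl
  have hd3 : convPow k B 3 = conv (convPow k B 2) LinearMap.id := rfl
  -- comultiplication values
  have hΔ1 : Coalgebra.comul (R := k) (1 : B) = (1 : B) ⊗ₜ[k] (1 : B) := by
    rw [Bialgebra.comul_one, Algebra.TensorProduct.one_def]
  have hΔx2 : Coalgebra.comul (R := k) (x^2) = (x^2) ⊗ₜ[k] (x^2) := by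
    rw [pow_two, Bialgebra.comul_mul, hΔx, Algebra.TensorProduct.tmul_mul_tmul, ← pow_two]
  have hΔxy : Coalgebra.comul (R := k) (x*y) = (x^2) ⊗ₜ[k] (x*y) + (x*y) ⊗ₜ[k] x := by
    rw [Bialgebra.comul_mul, hΔx, hΔy, mul_add, Algebra.TensorProduct.tmul_mul_tmul,
      Algebra.TensorProduct.tmul_mul_tmul, mul_one, ← pow_two]
  have hΔx2y : Coalgebra.comul (R := k) (x^2*y) = x ⊗ₜ[k] (x^2*y) + (x^2*y) ⊗ₜ[k] (x^2) := by
    rw [Bialgebra.comul_mul, hΔx2, hΔy, mul_add, Algebra.TensorProduct.tmul_mul_tmul,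
      Algebra.TensorProduct.tmul_mul_tmul, mul_one, hxx3]
  -- counit values
  have hε1 : Coalgebra.counit (R := k) (1 : B) = 1 := Bialgebra.counit_one
  have hεx2 : Coalgebra.counit (R := k) (x^2) = 1 := by
    rw [pow_two, Bialgebra.counit_mul, hεx, mul_one]
  have hεxy : Coalgebra.counit (R := k) (x*y) = 0 := by
    rw [Bialgebra.counit_mul, hεy, mul_zero]
  have hεx2y : Coalgebra.counit (R := k) (x^2*y) = 0 := by
    rw [Bialgebra.counit_mul, hεy, mul_zero]
  -- convPow 1 values
  have e1_1 : convPow k B 1 (1 : B) = 1 := by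
    rw [hd1, hcv _ _ _ _ hΔ1]; simp [hP0, hε1]
  have e1_x : convPow k B 1 x = x := by
    rw [hd1, hcv _ _ _ _ hΔx]; simp [hP0, hεx]
  have e1_x2 : convPow k B 1 (x^2) = x^2 := by
    rw [hd1, hcv _ _ _ _ hΔx2]; simp [hP0, hεx2]
  have e1_y : convPow k B 1 y = y := by
    rw [hd1, hcv _ _ _ _ hΔy]; simp [hP0, hεx, hεy]
  have e1_xy : convPow k B 1 (x*y) = x*y := by
    rw [hd1, hcv _ _ _ _ hΔxy]; simp [hP0, hεx2, hεxy]
  have e1_x2y : convPow k B 1 (x^2*y) = x^2*y := by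
    rw [hd1, hcv _ _ _ _ hΔx2y]; simp [hP0, hεx, hεx2y]
  -- convPow 2 values
  have e2_1 : convPow k B 2 (1 : B) = 1 := by
    rw [hd2, hcv _ _ _ _ hΔ1]; simp [e1_1]
  have e2_x : convPow k B 2 x = x * x := by
    rw [hd2, hcv _ _ _ _ hΔx]; simp [e1_x]
  have e2_x2 : convPow k B 2 (x^2) = x * x := by
    rw [hd2, hcv _ _ _ _ hΔx2]; simp [e1_x2]
    simp only [pow_two, mul_assoc, r2]
  have e2_y : convPow k B 2 y = x*y + y := by
    rw [hd2, hcv _ _ _ _ hΔy]; simp [e1_x, e1_y]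
  have e2_xy : convPow k B 2 (x*y) = x*y - x*(x*y) := by
    rw [hd2, hcv _ _ _ _ hΔxy]; simp [e1_x2, e1_xy]
    simp only [pow_two, mul_assoc, r1, r2, r2', hyx, mul_neg, neg_neg, sub_eq_add_neg]
  have e2_x2y : convPow k B 2 (x^2*y) = x*y + x*(x*y) := by
    rw [hd2, hcv _ _ _ _ hΔx2y]; simp [e1_x, e1_x2y]
    simp only [pow_two, mul_assoc, r1, r2, r2', hyx, mul_neg, neg_neg]
  -- convPow 3 values
  have e3_1 : convPow k B 3 (1 : B) = 1 := by
    rw [hd3, hcv _ _ _ _ hΔ1]; simp [e2_1]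
  have e3_x : convPow k B 3 x = x := by
    rw [hd3, hcv _ _ _ _ hΔx]; simp [e2_x]
    simp only [mul_assoc, r2', hx3'']
  have e3_x2 : convPow k B 3 (x^2) = x^2 := by
    rw [hd3, hcv _ _ _ _ hΔx2]; simp [e2_x2]
    simp only [pow_two, mul_assoc, r2, r2']
  have e3_y : convPow k B 3 y = y + x*y + x*(x*y) := by
    rw [hd3, hcv _ _ _ _ hΔy]; simp [e2_x, e2_y]
    simp only [mul_assoc]; abel
  have e3_xy : convPow k B 3 (x*y) = x*y + x*y - x*(x*y) := by
    rw [hd3, hcv _ _ _ _ hΔxy]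
    simp only [map_add, TensorProduct.map_tmul, LinearMap.mul'_apply, LinearMap.id_coe,
      id_eq, e2_x2, e2_xy]
    simp only [pow_two, mul_assoc, sub_mul, add_mul, neg_mul, r1, r2, r2', hyx,
      mul_neg, neg_neg, sub_eq_add_neg]
    abel
  have e3_x2y : convPow k B 3 (x^2*y) = x*y + x*(x*y) + x*(x*y) := by
    rw [hd3, hcv _ _ _ _ hΔx2y]
    simp only [map_add, TensorProduct.map_tmul, LinearMap.mul'_apply, LinearMap.id_coe,
      id_eq, e2_x, e2_x2y]
    simp only [pow_two, mul_assoc, sub_mul, add_mul, neg_mul, r1, r2, r2', hyx,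
      mul_neg, neg_neg, sub_eq_add_neg]
    abel
  -- the antipode
  set Sm : B →ₗ[k] B := (2 : k) • (LinearMap.id : B →ₗ[k] B) - convPow k B 3 with hSm
  have hSapp : ∀ b : B, Sm b = b + b - convPow k B 3 b := fun b => by
    simp [hSm, two_smul, LinearMap.sub_apply, LinearMap.smul_apply]
  have nS1 : Sm 1 = 1 := by rw [hSapp, e3_1]; abel
  have nSx : Sm x = x := by rw [hSapp, e3_x]; abel
  have nSx2 : Sm (x^2) = x^2 := by rw [hSapp, e3_x2]; abel
  have nSxx : Sm (x*x) = x*x := by simpa [pow_two] using nSx2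
  have nSy : Sm y = y - x*y - x*(x*y) := by rw [hSapp, e3_y]; abel
  have nSxy : Sm (x*y) = x*(x*y) := by rw [hSapp, e3_xy]; abel
  have nSx2y : Sm (x^2*y) = -(x*y) := by
    rw [hSapp, e3_x2y]; simp only [pow_two, mul_assoc]; abel
  have nSxxy : Sm (x*(x*y)) = -(x*y) := by simpa [pow_two, mul_assoc] using nSx2y
  -- anti-multiplicativity
  have key : (LinearMap.mul k B).compr₂ Sm = (LinearMap.mul k B ∘ₗ Sm).flip ∘ₗ Sm := by
    refine hspan2 _ _ ?_ ?_ ?_ ?_ ?_ ?_ <;>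
      refine hspan _ _ ?_ ?_ ?_ ?_ ?_ ?_ <;>
      · simp only [LinearMap.compr₂_apply, LinearMap.mul_apply', LinearMap.comp_apply,
          LinearMap.flip_apply]
        simp only [pow_two, mul_assoc, sub_eq_add_neg, mul_add, add_mul, neg_mul,
          mul_neg, neg_neg, one_mul, mul_one, r1, r2, r2', r3, r3', hyx, zero_mul,
          mul_zero, add_zero, zero_add, map_add, map_neg, map_zero, nS1, nSx, nSxx,
          nSy, nSxy, nSxxy]
        try abel
  have hanti : ∀ a b : B, Sm (a * b) = Sm b * Sm a := by
    intro a b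
    have h2 := DFunLike.congr_fun (DFunLike.congr_fun key a) b
    simpa only [LinearMap.compr₂_apply, LinearMap.mul_apply', LinearMap.comp_apply,
      LinearMap.flip_apply] using h2
  refine ⟨Sm, hSm, nSx, ?_, nS1, hanti, ?_, ?_, ?_, ?_⟩
  · rw [nSy]
    simp only [sub_mul, one_mul, pow_two, mul_assoc]
  · -- conv Sm (convPow 2) = convPow 1
    refine hspan _ _ ?_ ?_ ?_ ?_ ?_ ?_
    · rw [hcv _ _ _ _ hΔ1, e1_1]
      simp only [TensorProduct.map_tmul, LinearMap.mul'_apply, nS1, e2_1, one_mul]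
    · rw [hcv _ _ _ _ hΔx, e1_x]
      simp only [TensorProduct.map_tmul, LinearMap.mul'_apply, nSx, e2_x, r2']
    · rw [hcv _ _ _ _ hΔx2, e1_x2]
      simp only [TensorProduct.map_tmul, LinearMap.mul'_apply, nSx2, e2_x2]
      simp only [pow_two, mul_assoc, r2, r2']
    · rw [hcv _ _ _ _ hΔy, e1_y]
      simp only [map_add, TensorProduct.map_tmul, LinearMap.mul'_apply, nSx, nSy,
        e2_y, e2_1]
      simp only [pow_two, mul_assoc, sub_eq_add_neg, mul_add, add_mul, neg_mul,
        mul_neg, neg_neg, one_mul, mul_one, r1, r2, r2', r3, r3', hyx]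
      abel
    · rw [hcv _ _ _ _ hΔxy, e1_xy]
      simp only [map_add, TensorProduct.map_tmul, LinearMap.mul'_apply, nSx2, nSxy,
        e2_xy, e2_x]
      simp only [pow_two, mul_assoc, sub_eq_add_neg, mul_add, add_mul, neg_mul,
        mul_neg, neg_neg, one_mul, mul_one, r1, r2, r2', r3, r3', hyx]
      abel
    · rw [hcv _ _ _ _ hΔx2y, e1_x2y]
      simp only [map_add, TensorProduct.map_tmul, LinearMap.mul'_apply, nSx, nSx2y,
        e2_x2y, e2_x2]
      simp only [pow_two, mul_assoc, sub_eq_add_neg, mul_add, add_mul, neg_mul,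
        mul_neg, neg_neg, one_mul, mul_one, r1, r2, r2', r3, r3', hyx]
      abel
  · -- conv (convPow 2) Sm = convPow 1
    refine hspan _ _ ?_ ?_ ?_ ?_ ?_ ?_
    · rw [hcv _ _ _ _ hΔ1, e1_1]
      simp only [TensorProduct.map_tmul, LinearMap.mul'_apply, nS1, e2_1, one_mul]
    · rw [hcv _ _ _ _ hΔx, e1_x]
      simp only [TensorProduct.map_tmul, LinearMap.mul'_apply, nSx, e2_x]
      simp only [mul_assoc, r2', hx3'']
    · rw [hcv _ _ _ _ hΔx2, e1_x2]
      simp only [TensorProduct.map_tmul, LinearMap.mul'_apply, nSx2, e2_x2]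
      simp only [pow_two, mul_assoc, r2, r2']
    · rw [hcv _ _ _ _ hΔy, e1_y]
      simp only [map_add, TensorProduct.map_tmul, LinearMap.mul'_apply, nS1, nSy,
        e2_y, e2_x]
      simp only [pow_two, mul_assoc, sub_eq_add_neg, mul_add, add_mul, neg_mul,
        mul_neg, neg_neg, one_mul, mul_one, r1, r2, r2', r3, r3', hyx]
      abel
    · rw [hcv _ _ _ _ hΔxy, e1_xy]
      simp only [map_add, TensorProduct.map_tmul, LinearMap.mul'_apply, nSx, nSxy,
        e2_xy, e2_x2]
      simp only [pow_two, mul_assoc, sub_eq_add_neg, mul_add, add_mul, neg_mul,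
        mul_neg, neg_neg, one_mul, mul_one, r1, r2, r2', r3, r3', hyx]
      abel
    · rw [hcv _ _ _ _ hΔx2y, e1_x2y]
      simp only [map_add, TensorProduct.map_tmul, LinearMap.mul'_apply, nSx2, nSx2y,
        e2_x2y, e2_x]
      simp only [pow_two, mul_assoc, sub_eq_add_neg, mul_add, add_mul, neg_mul,
        mul_neg, neg_neg, one_mul, mul_one, r1, r2, r2', r3, r3', hyx]
      abel
  · -- conv Sm id = conv id Sm
    refine hspan _ _ ?_ ?_ ?_ ?_ ?_ ?_ <;>
      [rw [hcv Sm _ _ _ hΔ1, hcv _ Sm _ _ hΔ1];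
       rw [hcv Sm _ _ _ hΔx, hcv _ Sm _ _ hΔx];
       rw [hcv Sm _ _ _ hΔx2, hcv _ Sm _ _ hΔx2];
       rw [hcv Sm _ _ _ hΔy, hcv _ Sm _ _ hΔy];
       rw [hcv Sm _ _ _ hΔxy, hcv _ Sm _ _ hΔxy];
       rw [hcv Sm _ _ _ hΔx2y, hcv _ Sm _ _ hΔx2y]] <;>
      · simp only [map_add, TensorProduct.map_tmul, LinearMap.mul'_apply,
          LinearMap.id_coe, id_eq, nS1, nSx, nSx2, nSy, nSxy, nSx2y]
        try simp only [pow_two, mul_assoc, sub_eq_add_neg, mul_add, add_mul, neg_mul,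
          mul_neg, neg_neg, one_mul, mul_one, r1, r2, r2', r3, r3', hyx, zero_mul,
          mul_zero, add_zero, zero_add]
        try abel
  · -- S^4 = id
    refine hspan _ _ ?_ ?_ ?_ ?_ ?_ ?_ <;>
      · simp only [LinearMap.comp_apply, LinearMap.id_coe, id_eq]
        simp only [pow_two, mul_assoc, map_add, map_sub, map_neg, map_zero, nS1, nSx,
          nSxx, nSy, nSxy, nSxxy, sub_eq_add_neg, neg_neg, neg_add_rev]
        try abel
end
end
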